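/- arXiv:2210.08426 — 4 statements merged into one kernel-verified Lean document; each statement's English description precedes it below -/
import Mathlib

section
/- Define B_n as the number of broken records at time n for an i.i.d. sequence X_0, X_1, ... of Uniform(0,1) random variables, where the current records at time m are the Pareto-optimal pairs (i, X_i) for i ≤ m under the componentwise order, and B_n = |R_{n-1} \ R_n|. Then P[B_n = 1] = 1/4 + O(1/n²); more precisely P[B_n = 1] equals 1/(n(n+1)) plus ∑_{j=1}^{n-1} 1/(j(j+1)(j+2)). -/
open MeasureTheory ProbabilityTheory
open scoped ENNReal

/-- `i` is a current record at time `m`. -/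
def IsCurrentRecord (X : ℕ → Ω → ℝ) (m i : ℕ) (ω : Ω) : Prop :=
  i ≤ m ∧ ∀ j, i < j → j ≤ m → X j ω < X i ω

/-- Number of records broken at time `n`. -/
noncomputable def brokenCount (X : ℕ → Ω → ℝ) (n : ℕ) (ω : Ω) : ℕ :=
  Set.ncard {i | IsCurrentRecord X (n - 1) i ω ∧ ¬ IsCurrentRecord X n i ω}

open scoped Nat


noncomputable def unif : Measure ℝ := volume.restrict (Set.Icc 0 1)

instance : IsProbabilityMeasure unif :=
  ⟨by simp [unif, Real.volume_Icc]⟩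

instance : NullSingletonClass unif := by unfold unif; infer_instance

noncomputable def unifPi (N : ℕ) : Measure (Fin N → ℝ) := Measure.pi fun _ => unif

instance (N : ℕ) : IsProbabilityMeasure (unifPi N) := by unfold unifPi; infer_instance

def chainEvt {N m : ℕ} (r : Fin m → Fin N) : Set (Fin N → ℝ) :=
  {x | ∀ i j : Fin m, i < j → x (r i) < x (r j)}

lemma measurableSet_chainEvt {N m : ℕ} (r : Fin m → Fin N) : MeasurableSet (chainEvt r) := by
  have : chainEvt r = ⋂ (i) (j) (_ : i < j), {x : Fin N → ℝ | x (r i) < x (r j)} := by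
    ext x; simp [chainEvt]
  rw [this]
  exact .iInter fun i => .iInter fun j => .iInter fun _ =>
    measurableSet_lt (measurable_pi_apply _) (measurable_pi_apply _)

example {N : ℕ} (σ : Equiv.Perm (Fin N)) :
    MeasurePreserving (MeasurableEquiv.piCongrLeft (fun _ => ℝ) σ) (unifPi N) (unifPi N) :=
  measurePreserving_piCongrLeft (fun _ => unif) σ

example {N : ℕ} (σ : Equiv.Perm (Fin N)) (x : Fin N → ℝ) (i : Fin N) :
    (MeasurableEquiv.piCongrLeft (fun _ => ℝ) σ) x (σ i) = x i :=
  MeasurableEquiv.piCongrLeft_apply_apply (β := fun _ => ℝ) σ x i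

example {m : ℕ} (g : Fin m → ℝ) (τ τ' : Equiv.Perm (Fin m))
    (h : StrictMono (g ∘ τ)) (h' : StrictMono (g ∘ τ')) : τ = τ' := by
  have he : g ∘ τ = g ∘ τ' := Tuple.unique_monotone h.monotone h'.monotone
  have hg : Function.Injective g := by
    have h1 : Function.Injective (g ∘ τ) := h.injective
    have : g = (g ∘ τ) ∘ τ.symm := by ext i; simp
    rw [this]; exact h1.comp τ.symm.injective
  exact Equiv.coe_fn_injective (funext fun i => hg (congrFun he i))

lemma mem_chainEvt_iff {N m : ℕ} (r : Fin m → Fin N) (x : Fin N → ℝ) :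
    x ∈ chainEvt r ↔ StrictMono (x ∘ r) := Iff.rfl

lemma chainEvt_perm_measure {N m : ℕ} (r : Fin m → Fin N) (hr : Function.Injective r)
    (τ : Equiv.Perm (Fin m)) :
    unifPi N (chainEvt (r ∘ τ)) = unifPi N (chainEvt r) := by
  classical
  set f := Equiv.ofInjective r hr with hf
  set σ : Equiv.Perm (Fin N) := (τ⁻¹).extendDomain f with hσdef
  have hσ : ∀ i, σ (r i) = r (τ⁻¹ i) := by
    intro i
    have h1 : σ (f i) = f (τ⁻¹ i) := Equiv.Perm.extendDomain_apply_image τ⁻¹ f i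
    simpa [hf] using h1
  set G := MeasurableEquiv.piCongrLeft (fun _ : Fin N => ℝ) σ with hG
  have hGP : MeasurePreserving G (unifPi N) (unifPi N) :=
    measurePreserving_piCongrLeft (fun _ => unif) σ
  have hGx : ∀ (x : Fin N → ℝ) (a : Fin N), G x (σ a) = x a := fun x a =>
    MeasurableEquiv.piCongrLeft_apply_apply (β := fun _ => ℝ) σ x a
  have hpre : G ⁻¹' chainEvt r = chainEvt (r ∘ τ) := by
    ext x
    simp only [Set.mem_preimage, chainEvt, Set.mem_setOf_eq, Function.comp_apply]
    have hri : ∀ i : Fin m, G x (r i) = x (r (τ i)) := by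
      intro i
      have : r i = σ (r (τ i)) := by rw [hσ (τ i), Equiv.Perm.inv_def, Equiv.symm_apply_apply]
      rw [this, hGx]
    constructor
    · intro h i j hij; have := h i j hij; rwa [hri, hri] at this
    · intro h i j hij; rw [hri, hri]; exact h i j hij
  rw [← hpre]
  exact hGP.measure_preimage (measurableSet_chainEvt r).nullMeasurableSet

lemma perm_eq_of_chain {m : ℕ} (g : Fin m → ℝ) (τ τ' : Equiv.Perm (Fin m))
    (h : StrictMono (g ∘ τ)) (h' : StrictMono (g ∘ τ')) : τ = τ' := by
  have he : g ∘ τ = g ∘ τ' := Tuple.unique_monotone h.monotone h'.monotone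
  have hg : Function.Injective g := by
    have h1 : Function.Injective (g ∘ τ) := h.injective
    have h2 : g = (g ∘ τ) ∘ τ.symm := by ext i; simp
    rw [h2]; exact h1.comp τ.symm.injective
  exact Equiv.coe_fn_injective (funext fun i => hg (congrFun he i))

lemma chainEvt_measure {N m : ℕ} (r : Fin m → Fin N) (hr : Function.Injective r)
    (hties : ∀ a b : Fin N, a ≠ b → unifPi N {x | x a = x b} = 0) :
    unifPi N (chainEvt r) = (m ! : ℝ≥0∞)⁻¹ := by
  classical
  set T : Set (Fin N → ℝ) := ⋃ (i : Fin m) (j : Fin m) (_ : i ≠ j), {x | x (r i) = x (r j)} with hT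
  have hT0 : unifPi N T = 0 :=
    measure_iUnion_null fun i => measure_iUnion_null fun j => measure_iUnion_null fun hij =>
      hties _ _ (fun h => hij (hr h))
  have hdisj : Pairwise (Function.onFun Disjoint
      fun τ : Equiv.Perm (Fin m) => chainEvt (r ∘ τ)) := by
    intro τ τ' hττ'
    refine Set.disjoint_left.mpr fun x hx hx' => hττ' ?_
    exact perm_eq_of_chain (x ∘ r) τ τ' hx hx'
  have hcover : (Set.univ : Set (Fin N → ℝ)) ⊆
      T ∪ ⋃ τ : Equiv.Perm (Fin m), chainEvt (r ∘ τ) := by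
    intro x _
    by_cases hx : ∃ i j : Fin m, i ≠ j ∧ x (r i) = x (r j)
    · obtain ⟨i, j, hij, hev⟩ := hx
      exact Or.inl (Set.mem_iUnion.2 ⟨i, Set.mem_iUnion.2 ⟨j, Set.mem_iUnion.2 ⟨hij, hev⟩⟩⟩)
    · push_neg at hx
      have hinj : Function.Injective (x ∘ r) := fun i j h => by
        by_contra hne; exact hx i j hne h
      refine Or.inr (Set.mem_iUnion.2 ⟨Tuple.sort (x ∘ r), ?_⟩)
      have hmono := Tuple.monotone_sort (x ∘ r)
      have hsm : StrictMono ((x ∘ r) ∘ Tuple.sort (x ∘ r)) :=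
        hmono.strictMono_of_injective (hinj.comp (Equiv.injective _))
      exact fun i j hij => hsm hij
  have hmeasτ : ∀ τ : Equiv.Perm (Fin m), MeasurableSet (chainEvt (r ∘ τ)) :=
    fun τ => measurableSet_chainEvt _
  have hU : unifPi N (⋃ τ : Equiv.Perm (Fin m), chainEvt (r ∘ τ)) = 1 := by
    refine le_antisymm prob_le_one ?_
    calc (1 : ℝ≥0∞) = unifPi N Set.univ := measure_univ.symm
    _ ≤ unifPi N (T ∪ ⋃ τ : Equiv.Perm (Fin m), chainEvt (r ∘ τ)) := measure_mono hcover
    _ ≤ unifPi N T + unifPi N (⋃ τ : Equiv.Perm (Fin m), chainEvt (r ∘ τ)) := measure_union_le _ _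
    _ = unifPi N (⋃ τ : Equiv.Perm (Fin m), chainEvt (r ∘ τ)) := by rw [hT0, zero_add]
  have hsum : ∑' τ : Equiv.Perm (Fin m), unifPi N (chainEvt (r ∘ τ)) = 1 := by
    rw [← measure_iUnion hdisj hmeasτ, hU]
  rw [tsum_fintype] at hsum
  have hconst : ∀ τ ∈ (Finset.univ : Finset (Equiv.Perm (Fin m))), unifPi N (chainEvt (r ∘ τ)) = unifPi N (chainEvt r) :=
    fun τ _ => chainEvt_perm_measure r hr τ
  rw [Finset.sum_congr rfl hconst, Finset.sum_const, Finset.card_univ, Fintype.card_perm,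
    Fintype.card_fin] at hsum
  have hm0 : (m ! : ℝ≥0∞) ≠ 0 := by
    simp [Nat.factorial_ne_zero]
  have hmtop : (m ! : ℝ≥0∞) ≠ ⊤ := by simp
  rw [nsmul_eq_mul] at hsum
  rw [← one_mul (unifPi N (chainEvt r)), ← ENNReal.inv_mul_cancel hm0 hmtop, mul_assoc, hsum,
    mul_one]

def topEvt {N m : ℕ} (r : Fin m → Fin N) (k : Fin m) : Set (Fin N → ℝ) :=
  {x | (∀ i : Fin m, i < k → x (r i) < x (r k)) ∧
       ∀ i j : Fin m, k ≤ i → i < j → x (r i) < x (r j)}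

lemma measurableSet_topEvt {N m : ℕ} (r : Fin m → Fin N) (k : Fin m) :
    MeasurableSet (topEvt r k) := by
  have h1 : topEvt r k = (⋂ (i) (_ : i < k), {x : Fin N → ℝ | x (r i) < x (r k)}) ∩
      ⋂ (i) (j) (_ : k ≤ i) (_ : i < j), {x : Fin N → ℝ | x (r i) < x (r j)} := by
    ext x
    simp only [topEvt, Set.mem_setOf_eq, Set.mem_inter_iff, Set.mem_iInter]
  rw [h1]
  apply MeasurableSet.inter
  · exact MeasurableSet.iInter fun i => MeasurableSet.iInter fun _ =>
      measurableSet_lt (measurable_pi_apply _) (measurable_pi_apply _)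
  · exact MeasurableSet.iInter fun i => MeasurableSet.iInter fun j =>
      MeasurableSet.iInter fun _ => MeasurableSet.iInter fun _ =>
      measurableSet_lt (measurable_pi_apply _) (measurable_pi_apply _)

def botEquiv {m : ℕ} (k : Fin m) : Fin k.1 ≃ {i : Fin m // i.1 < k.1} where
  toFun a := ⟨⟨a.1, a.2.trans k.2⟩, a.2⟩
  invFun b := ⟨b.1.1, b.2⟩
  left_inv a := rfl
  right_inv b := rfl

def emb {m : ℕ} (k : Fin m) (τ : Equiv.Perm (Fin k.1)) : Equiv.Perm (Fin m) :=
  τ.extendDomain (botEquiv k)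

lemma emb_apply_lt {m : ℕ} (k : Fin m) (τ : Equiv.Perm (Fin k.1)) (i : Fin m) (h : i.1 < k.1) :
    emb k τ i = ⟨(τ ⟨i.1, h⟩).1, ((τ ⟨i.1, h⟩).2).trans k.2⟩ := by
  have h1 := Equiv.Perm.extendDomain_apply_subtype τ (botEquiv k) (b := i) h
  rw [emb, h1]
  rfl

lemma emb_apply_ge {m : ℕ} (k : Fin m) (τ : Equiv.Perm (Fin k.1)) (i : Fin m) (h : ¬ i.1 < k.1) :
    emb k τ i = i :=
  Equiv.Perm.extendDomain_apply_not_subtype τ (botEquiv k) h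

lemma emb_inj {m : ℕ} (k : Fin m) (τ τ' : Equiv.Perm (Fin k.1)) (h : emb k τ = emb k τ') :
    τ = τ' := by
  apply Equiv.coe_fn_injective
  funext a
  have h1 : emb k τ ⟨a.1, a.2.trans k.2⟩ = emb k τ' ⟨a.1, a.2.trans k.2⟩ := by rw [h]
  rw [emb_apply_lt k τ _ a.2, emb_apply_lt k τ' _ a.2] at h1
  have h2 := congrArg Fin.val h1
  simp only [Fin.val] at h2
  exact Fin.ext h2

lemma emb_lt_val {m : ℕ} (k : Fin m) (τ : Equiv.Perm (Fin k.1)) (i : Fin m) (h : i.1 < k.1) :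
    (emb k τ i).1 < k.1 := by
  rw [emb_apply_lt k τ i h]
  exact (τ ⟨i.1, h⟩).2

lemma chainEvt_emb_subset {N m : ℕ} (r : Fin m → Fin N) (k : Fin m)
    (τ : Equiv.Perm (Fin k.1)) : chainEvt (r ∘ emb k τ) ⊆ topEvt r k := by
  intro x hx
  have hk : emb k τ k = k := emb_apply_ge k τ k (lt_irrefl k.1)
  constructor
  · intro i hik
    have hik' : i.1 < k.1 := hik
    set a : Fin k.1 := ⟨i.1, hik'⟩ with ha
    set i' : Fin m := ⟨(τ⁻¹ a).1, (τ⁻¹ a).2.trans k.2⟩ with hi'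
    have hembi' : emb k τ i' = i := by
      rw [emb_apply_lt k τ i' (τ⁻¹ a).2]
      apply Fin.ext
      show (τ ⟨(τ⁻¹ a).1, _⟩).1 = i.1
      have : (⟨(τ⁻¹ a).1, (τ⁻¹ a).2⟩ : Fin k.1) = τ⁻¹ a := rfl
      rw [this, Equiv.Perm.inv_def, Equiv.apply_symm_apply]
    have hi'k : i' < k := (τ⁻¹ a).2
    have := hx i' k hi'k
    simpa [Function.comp, hembi', hk] using this
  · intro i j hki hij
    have hi : emb k τ i = i := emb_apply_ge k τ i (by exact fun hc => absurd hki (by exact not_le.mpr hc))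
    have hj : emb k τ j = j := emb_apply_ge k τ j (by
      intro hc
      exact absurd (hki.trans hij.le) (not_le.mpr hc))
    have := hx i j hij
    simpa [Function.comp, hi, hj] using this

lemma topEvt_measure {N m : ℕ} (r : Fin m → Fin N) (hr : Function.Injective r) (k : Fin m)
    (hties : ∀ a b : Fin N, a ≠ b → unifPi N {x | x a = x b} = 0) :
    unifPi N (topEvt r k) = (k.1 ! : ℝ≥0∞) * (m ! : ℝ≥0∞)⁻¹ := by
  classical
  set T : Set (Fin N → ℝ) := ⋃ (i : Fin m) (j : Fin m) (_ : i ≠ j), {x | x (r i) = x (r j)} with hT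
  have hT0 : unifPi N T = 0 :=
    measure_iUnion_null fun i => measure_iUnion_null fun j => measure_iUnion_null fun hij =>
      hties _ _ (fun h => hij (hr h))
  have hchain : ∀ τ : Equiv.Perm (Fin k.1),
      unifPi N (chainEvt (r ∘ emb k τ)) = (m ! : ℝ≥0∞)⁻¹ := fun τ =>
    chainEvt_measure _ (hr.comp (emb k τ).injective) hties
  have hdisj : Pairwise (Function.onFun Disjoint
      fun τ : Equiv.Perm (Fin k.1) => chainEvt (r ∘ emb k τ)) := by
    intro τ τ' hττ'
    refine Set.disjoint_left.mpr fun x hx hx' => hττ' ?_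
    exact emb_inj k τ τ' (perm_eq_of_chain (x ∘ r) (emb k τ) (emb k τ') hx hx')
  have hmeasτ : ∀ τ : Equiv.Perm (Fin k.1), MeasurableSet (chainEvt (r ∘ emb k τ)) :=
    fun τ => measurableSet_chainEvt _
  have hcov : topEvt r k ⊆ T ∪ ⋃ τ : Equiv.Perm (Fin k.1), chainEvt (r ∘ emb k τ) := by
    intro x hx
    by_cases hxT : ∃ i j : Fin m, i ≠ j ∧ x (r i) = x (r j)
    · obtain ⟨i, j, hij, hev⟩ := hxT
      exact Or.inl (Set.mem_iUnion.2 ⟨i, Set.mem_iUnion.2 ⟨j, Set.mem_iUnion.2 ⟨hij, hev⟩⟩⟩)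
    · push_neg at hxT
      have hinj : Function.Injective (x ∘ r) := fun i j h => by
        by_contra hne; exact hxT i j hne h
      set g : Fin k.1 → ℝ := fun a => x (r ⟨a.1, a.2.trans k.2⟩) with hg
      have hginj : Function.Injective g := by
        intro a b hab
        have h2 := congrArg Fin.val (hinj hab)
        simp only [Fin.val] at h2
        exact Fin.ext h2
      set τ := Tuple.sort g with hτ
      have hsm : StrictMono (g ∘ τ) :=
        (Tuple.monotone_sort g).strictMono_of_injective (hginj.comp (Equiv.injective _))
      refine Or.inr (Set.mem_iUnion.2 ⟨τ, ?_⟩)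
      intro i j hij
      show x (r (emb k τ i)) < x (r (emb k τ j))
      obtain ⟨hx1, hx2⟩ := hx
      have hgemb : ∀ (i : Fin m) (h : i.1 < k.1), x (r (emb k τ i)) = g (τ ⟨i.1, h⟩) := by
        intro i h
        rw [emb_apply_lt k τ i h]
      by_cases hik : i.1 < k.1
      · by_cases hjk : j.1 < k.1
        · rw [hgemb i hik, hgemb j hjk]
          exact hsm (show (⟨i.1, hik⟩ : Fin k.1) < ⟨j.1, hjk⟩ from hij)
        · -- i below k, j at or above k
          have h1 : x (r (emb k τ i)) < x (r k) := hx1 (emb k τ i) (emb_lt_val k τ i hik)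
          have hj : emb k τ j = j := emb_apply_ge k τ j hjk
          rw [hj]
          rcases eq_or_lt_of_le (not_lt.mp hjk) with hkj | hkj
          · have : k = j := Fin.ext hkj
            rw [← this]; exact h1
          · exact h1.trans (hx2 k j le_rfl hkj)
      · have hjk : ¬ j.1 < k.1 := fun hc => hik ((Fin.lt_iff_val_lt_val.mp hij).trans hc)
        rw [emb_apply_ge k τ i hik, emb_apply_ge k τ j hjk]
        exact hx2 i j (not_lt.mp hik) hij
  have hUeq : unifPi N (⋃ τ : Equiv.Perm (Fin k.1), chainEvt (r ∘ emb k τ)) =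
      (k.1 ! : ℝ≥0∞) * (m ! : ℝ≥0∞)⁻¹ := by
    rw [measure_iUnion hdisj hmeasτ, tsum_fintype]
    have hconst : ∀ τ ∈ (Finset.univ : Finset (Equiv.Perm (Fin k.1))),
        unifPi N (chainEvt (r ∘ emb k τ)) = (m ! : ℝ≥0∞)⁻¹ := fun τ _ => hchain τ
    rw [Finset.sum_congr rfl hconst, Finset.sum_const, Finset.card_univ, Fintype.card_perm,
      Fintype.card_fin, nsmul_eq_mul]
  refine le_antisymm ?_ ?_
  · calc unifPi N (topEvt r k)
        ≤ unifPi N (T ∪ ⋃ τ : Equiv.Perm (Fin k.1), chainEvt (r ∘ emb k τ)) := measure_mono hcov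
      _ ≤ unifPi N T + unifPi N (⋃ τ : Equiv.Perm (Fin k.1), chainEvt (r ∘ emb k τ)) :=
          measure_union_le _ _
      _ = (k.1 ! : ℝ≥0∞) * (m ! : ℝ≥0∞)⁻¹ := by rw [hT0, zero_add, hUeq]
  · rw [← hUeq]
    exact measure_mono (Set.iUnion_subset fun τ => chainEvt_emb_subset r k τ)

section OmegaSide

variable {Ω : Type*} [MeasurableSpace Ω] (μ : Measure Ω) [IsProbabilityMeasure μ]
  (X : ℕ → Ω → ℝ)

lemma measurable_Yfun (hmeas : ∀ i, Measurable (X i)) (N : ℕ) :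
    Measurable (fun ω (i : Fin N) => X i.1 ω) :=
  measurable_pi_lambda _ fun i => hmeas i.1

lemma map_Y_eq (hmeas : ∀ i, Measurable (X i))
    (hindep : iIndepFun X μ)
    (hunif : ∀ i, μ.map (X i) = volume.restrict (Set.Icc (0:ℝ) 1)) (N : ℕ) :
    μ.map (fun ω (i : Fin N) => X i.1 ω) = unifPi N := by
  classical
  refine (Measure.pi_eq fun s hs => ?_).symm
  set Y : Ω → Fin N → ℝ := fun ω (i : Fin N) => X i.1 ω with hY
  rw [Measure.map_apply (measurable_Yfun X hmeas N) (MeasurableSet.univ_pi hs)]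
  set sets : ∀ _ : ℕ, Set ℝ := fun i => if h : i < N then s ⟨i, h⟩ else Set.univ with hsets
  have hsetsm : ∀ i, i ∈ Finset.range N → MeasurableSet (sets i) := by
    intro i _
    by_cases h : i < N
    · rw [hsets]; simpa [dif_pos h] using hs ⟨i, h⟩
    · rw [hsets]; simp [dif_neg h]
  have hpre : Y ⁻¹' Set.pi Set.univ s = ⋂ i ∈ Finset.range N, X i ⁻¹' sets i := by
    ext ω
    simp only [Set.mem_preimage, Set.mem_pi, Set.mem_univ, forall_true_left, Set.mem_iInter,
      Finset.mem_range, hsets]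
    constructor
    · intro h i hi
      simp only [Set.mem_preimage, dif_pos hi]
      exact h ⟨i, hi⟩
    · intro h i
      have := h i.1 i.2
      simpa only [Set.mem_preimage, dif_pos i.2, Fin.eta] using this
  rw [hpre, hindep.measure_inter_preimage_eq_mul (Finset.range N) hsetsm]
  have hterm : ∀ i : ℕ, i < N → μ (X i ⁻¹' sets i) = unif (sets i) := by
    intro i _
    rw [← Measure.map_apply (hmeas i) (hsetsm i (Finset.mem_range.mpr ‹i < N›)), hunif i]
    rfl
  calc ∏ i ∈ Finset.range N, μ (X i ⁻¹' sets i)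
      = ∏ i ∈ Finset.range N, unif (sets i) :=
        Finset.prod_congr rfl fun i hi => hterm i (Finset.mem_range.mp hi)
    _ = ∏ i : Fin N, unif (sets i.1) := (Fin.prod_univ_eq_prod_range (fun i => unif (sets i)) N).symm
    _ = ∏ i : Fin N, unif (s i) := by
        refine Finset.prod_congr rfl fun i _ => ?_
        rw [hsets]
        simp only [dif_pos i.2, Fin.eta]

lemma ties_zero (hmeas : ∀ i, Measurable (X i))
    (hindep : iIndepFun X μ)
    (hunif : ∀ i, μ.map (X i) = volume.restrict (Set.Icc (0:ℝ) 1))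
    (a b : ℕ) (hab : a ≠ b) : μ {ω | X a ω = X b ω} = 0 := by
  have hind : IndepFun (X a) (X b) μ := hindep.indepFun hab
  have hmapab : μ.map (fun ω => (X a ω, X b ω)) = (μ.map (X a)).prod (μ.map (X b)) :=
    (indepFun_iff_map_prod_eq_prod_map_map (hmeas a).aemeasurable (hmeas b).aemeasurable).mp hind
  have hdiagm : MeasurableSet {p : ℝ × ℝ | p.1 = p.2} :=
    (isClosed_eq continuous_fst continuous_snd).measurableSet
  have h1 : {ω | X a ω = X b ω} = (fun ω => (X a ω, X b ω)) ⁻¹' {p : ℝ × ℝ | p.1 = p.2} := rfl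
  rw [h1, ← Measure.map_apply ((hmeas a).prodMk (hmeas b)) hdiagm, hmapab, hunif a, hunif b]
  rw [Measure.prod_apply hdiagm]
  have h2 : ∀ x : ℝ, (Prod.mk x ⁻¹' {p : ℝ × ℝ | p.1 = p.2}) = {x} := by
    intro x; ext y; simp [eq_comm]
  simp only [h2]
  simp [measure_singleton]

lemma prod_ties_zero (hmeas : ∀ i, Measurable (X i))
    (hindep : iIndepFun X μ)
    (hunif : ∀ i, μ.map (X i) = volume.restrict (Set.Icc (0:ℝ) 1)) (N : ℕ)
    (a b : Fin N) (hab : a ≠ b) : unifPi N {x | x a = x b} = 0 := by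
  have hm : MeasurableSet {x : Fin N → ℝ | x a = x b} :=
    measurableSet_eq_fun (measurable_pi_apply a) (measurable_pi_apply b)
  rw [← map_Y_eq μ X hmeas hindep hunif N, Measure.map_apply (measurable_Yfun X hmeas N) hm]
  exact ties_zero μ X hmeas hindep hunif a.1 b.1 (fun h => hab (Fin.ext h))

end OmegaSide

section Broken

variable {Ω' : Type*} {X : ℕ → Ω' → ℝ} {ω : Ω'} {n : ℕ}

lemma broken_iff (hn : 1 ≤ n) (i : ℕ) :
    (IsCurrentRecord X (n-1) i ω ∧ ¬ IsCurrentRecord X n i ω) ↔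
    (IsCurrentRecord X (n-1) i ω ∧ ¬ (X n ω < X i ω)) := by
  constructor
  · rintro ⟨⟨hi, hrec⟩, hnot⟩
    refine ⟨⟨hi, hrec⟩, fun hlt => hnot ⟨by omega, fun j hij hjn => ?_⟩⟩
    rcases eq_or_lt_of_le hjn with h | h
    · rwa [h]
    · exact hrec j hij (by omega)
  · rintro ⟨⟨hi, hrec⟩, hnlt⟩
    exact ⟨⟨hi, hrec⟩, fun hrn => hnlt (hrn.2 n (by omega) le_rfl)⟩

lemma brokenSet_SA (hn : 2 ≤ n)
    (h1 : ∀ i, i < n-1 → X i ω < X (n-1) ω) (h2 : X (n-1) ω < X n ω) :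
    {i | IsCurrentRecord X (n-1) i ω ∧ ¬ IsCurrentRecord X n i ω} = {n-1} := by
  ext i
  simp only [Set.mem_setOf_eq, Set.mem_singleton_iff, broken_iff (by omega : 1 ≤ n)]
  constructor
  · rintro ⟨⟨hi, hrec⟩, hnlt⟩
    by_contra hne
    have hilt : i < n-1 := by omega
    exact absurd (hrec (n-1) hilt le_rfl) (not_lt.mpr (h1 i hilt).le)
  · rintro rfl
    exact ⟨⟨le_rfl, fun j hij hjn => (Nat.lt_irrefl _ (hij.trans_le hjn)).elim⟩,
      not_lt.mpr h2.le⟩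

lemma brokenSet_SE (hn : 2 ≤ n) {j : ℕ} (hj1 : 1 ≤ j) (hj2 : j ≤ n-1)
    (h1 : ∀ c, 1 ≤ c → c < j → X (n-1-c) ω < X (n-1) ω)
    (h2 : X (n-1) ω < X n ω) (h3 : X n ω < X (n-1-j) ω) :
    {i | IsCurrentRecord X (n-1) i ω ∧ ¬ IsCurrentRecord X n i ω} = {n-1} := by
  ext i
  simp only [Set.mem_setOf_eq, Set.mem_singleton_iff, broken_iff (by omega : 1 ≤ n)]
  constructor
  · rintro ⟨⟨hi, hrec⟩, hnlt⟩
    by_contra hne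
    have hilt : i < n-1 := by omega
    rcases Nat.lt_trichotomy i (n-1-j) with hcase | hcase | hcase
    · exact hnlt (h3.trans (hrec (n-1-j) hcase (by omega)))
    · exact hnlt (by rw [hcase]; exact h3)
    · have hc1 : 1 ≤ n-1-i := by omega
      have hc2 : n-1-i < j := by omega
      have hx : X (n-1-(n-1-i)) ω < X (n-1) ω := h1 _ hc1 hc2
      rw [show n-1-(n-1-i) = i by omega] at hx
      exact absurd (hrec (n-1) hilt le_rfl) (not_lt.mpr hx.le)
  · rintro rfl
    exact ⟨⟨le_rfl, fun j' hij hjn => (Nat.lt_irrefl _ (hij.trans_le hjn)).elim⟩,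
      not_lt.mpr h2.le⟩

lemma broken_cases (hn : 2 ≤ n)
    (hgood : ∀ a b, a ≤ n → b ≤ n → a ≠ b → X a ω ≠ X b ω)
    (hB : brokenCount X n ω = 1) :
    ((∀ i, i < n-1 → X i ω < X (n-1) ω) ∧ X (n-1) ω < X n ω) ∨
    (∃ j, 1 ≤ j ∧ j ≤ n-1 ∧ (∀ c, 1 ≤ c → c < j → X (n-1-c) ω < X (n-1) ω) ∧
      X (n-1) ω < X n ω ∧ X n ω < X (n-1-j) ω) := by
  classical
  rw [brokenCount, Set.ncard_eq_one] at hB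
  obtain ⟨a, ha⟩ := hB
  have hmem : ∀ i, (IsCurrentRecord X (n-1) i ω ∧ ¬ IsCurrentRecord X n i ω) ↔ i = a := by
    intro i
    constructor
    · intro h
      rw [← Set.mem_singleton_iff, ← ha]
      exact h
    · intro h
      have h2 : i ∈ ({a} : Set ℕ) := h
      rw [← ha] at h2
      exact h2
  have haS := (hmem a).2 rfl
  obtain ⟨⟨han, harec⟩, hanlt⟩ := (broken_iff (by omega : 1 ≤ n) a).1 haS
  have hxn : X (n-1) ω < X n ω := by
    rcases eq_or_lt_of_le han with h | h
    · have hne := hgood (n-1) n (by omega) le_rfl (by omega)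
      rcases lt_or_eq_of_le (not_lt.mp (h ▸ hanlt)) with h' | h'
      · exact h'
      · exact absurd h' hne
    · exact (harec (n-1) h le_rfl).trans_le (not_lt.mp hanlt)
  have han1 : a = n-1 := by
    have := (hmem (n-1)).1 ((broken_iff (by omega : 1 ≤ n) (n-1)).2
      ⟨⟨le_rfl, fun j' hij hjn => (Nat.lt_irrefl _ (hij.trans_le hjn)).elim⟩,
        not_lt.mpr hxn.le⟩)
    omega
  by_cases hA : ∀ i, i < n-1 → X i ω < X (n-1) ω
  · exact Or.inl ⟨hA, hxn⟩
  · push_neg at hA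
    obtain ⟨i0, hi0lt, hi0ge⟩ := hA
    have hi0 : X (n-1) ω < X i0 ω :=
      lt_of_le_of_ne hi0ge (fun h => hgood (n-1) i0 (by omega) (by omega) (by omega) h)
    set P : ℕ → Prop := fun i => i < n-1 ∧ X (n-1) ω < X i ω with hP
    set J := Nat.findGreatest P (n-1) with hJ
    have hJP : P J := Nat.findGreatest_spec (m := i0) (by omega) ⟨hi0lt, hi0⟩
    have hJmax : ∀ i, J < i → i ≤ n-1 → ¬ P i := fun i h1 h2 =>
      Nat.findGreatest_is_greatest h1 h2
    obtain ⟨hJlt, hJx⟩ := hJP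
    have hsmall : ∀ i, J < i → i < n-1 → X i ω < X (n-1) ω := by
      intro i h1 h2
      have hnp : ¬ (i < n - 1 ∧ X (n-1) ω < X i ω) := hJmax i h1 (by omega)
      have hle : ¬ X (n-1) ω < X i ω := fun hx => hnp ⟨h2, hx⟩
      exact lt_of_le_of_ne (not_lt.mp hle)
        (fun h => hgood i (n-1) (by omega) (by omega) (by omega) h)
    have hJrec : IsCurrentRecord X (n-1) J ω := by
      refine ⟨by omega, fun j' hij hjn => ?_⟩
      rcases eq_or_lt_of_le hjn with h | h
      · rw [h]; exact hJx
      · exact (hsmall j' hij (by omega)).trans hJx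
    have hJnlt : X n ω < X J ω := by
      by_contra hc
      have := (hmem J).1 ((broken_iff (by omega : 1 ≤ n) J).2 ⟨hJrec, hc⟩)
      omega
    refine Or.inr ⟨n-1-J, by omega, by omega, ?_, hxn, ?_⟩
    · intro c hc1 hc2
      exact hsmall (n-1-c) (by omega) (by omega)
    · rw [show n-1-(n-1-J) = J by omega]
      exact hJnlt

end Broken

def rEv (n j c : ℕ) : ℕ :=
  if c < j-1 then n-2-c else if c = j-1 then n-1 else if c = j then n else n-1-j

lemma rEv_lt (n j c : ℕ) (hn : 2 ≤ n) : rEv n j c < n+1 := by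
  unfold rEv; split_ifs <;> omega

def rE (n j : ℕ) (hn : 2 ≤ n) (i : Fin (j+2)) : Fin (n+1) := ⟨rEv n j i.1, rEv_lt n j i.1 hn⟩

lemma rEv_eq_bot (n j c : ℕ) (h : c < j-1) : rEv n j c = n-2-c := by
  unfold rEv; rw [if_pos h]

lemma rEv_eq_k (n j : ℕ) : rEv n j (j-1) = n-1 := by
  unfold rEv; rw [if_neg (by omega), if_pos rfl]

lemma rEv_eq_n (n j : ℕ) (hj : 1 ≤ j) : rEv n j j = n := by
  unfold rEv; rw [if_neg (by omega), if_neg (by omega), if_pos rfl]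

lemma rEv_eq_top (n j : ℕ) (hj : 1 ≤ j) : rEv n j (j+1) = n-1-j := by
  unfold rEv; rw [if_neg (by omega), if_neg (by omega), if_neg (by omega)]

lemma rE_inj {n j : ℕ} (hn : 2 ≤ n) (hj1 : 1 ≤ j) (hj2 : j ≤ n-1) :
    Function.Injective (rE n j hn) := by
  intro a b h
  have h2 := congrArg Fin.val h
  simp only [rE] at h2
  have ha := a.2
  have hb := b.2
  apply Fin.ext
  simp only [rEv] at h2
  split_ifs at h2 <;> omega

lemma enn_nat_div (a b : ℕ) (hb : 0 < b) :
    (a : ℝ≥0∞) * ((b : ℝ≥0∞))⁻¹ = ENNReal.ofReal ((a : ℝ) / b) := by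
  rw [ENNReal.ofReal_div_of_pos (by exact_mod_cast hb), ENNReal.ofReal_natCast,
    ENNReal.ofReal_natCast, div_eq_mul_inv]

lemma real_fact_A {n : ℕ} (hn : 2 ≤ n) :
    (((n-1)! : ℕ) : ℝ) / (((n+1)! : ℕ) : ℝ) = 1 / ((n : ℝ) * ((n : ℝ) + 1)) := by
  have h1 : (n+1)! = (n+1) * (n * (n-1)!) := by
    rw [Nat.factorial_succ, Nat.mul_factorial_pred (by omega)]
  rw [h1]
  have hf : (((n-1)! : ℕ) : ℝ) ≠ 0 := Nat.cast_ne_zero.mpr (Nat.factorial_ne_zero _)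
  have hn0 : (n : ℝ) ≠ 0 := Nat.cast_ne_zero.mpr (by omega)
  have hn1 : (n : ℝ) + 1 ≠ 0 := by positivity
  push_cast
  field_simp

lemma real_fact_E {j : ℕ} (hj : 1 ≤ j) :
    (((j-1)! : ℕ) : ℝ) / (((j+2)! : ℕ) : ℝ) =
      1 / ((j : ℝ) * ((j : ℝ) + 1) * ((j : ℝ) + 2)) := by
  have h1 : (j+2)! = (j+2) * ((j+1) * (j * (j-1)!)) := by
    show (j+1+1)! = _
    rw [Nat.factorial_succ, Nat.factorial_succ, Nat.mul_factorial_pred (by omega)]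
  rw [h1]
  have hf : (((j-1)! : ℕ) : ℝ) ≠ 0 := Nat.cast_ne_zero.mpr (Nat.factorial_ne_zero _)
  have hj0 : (j : ℝ) ≠ 0 := Nat.cast_ne_zero.mpr (by omega)
  have hj1 : (j : ℝ) + 1 ≠ 0 := by positivity
  have hj2 : (j : ℝ) + 2 ≠ 0 := by positivity
  push_cast
  field_simp

theorem stmt_7 {Ω : Type*} [MeasurableSpace Ω] (μ : Measure Ω) [IsProbabilityMeasure μ]
    (X : ℕ → Ω → ℝ) (hmeas : ∀ i, Measurable (X i))
    (hindep : iIndepFun X μ)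
    (hunif : ∀ i, μ.map (X i) = volume.restrict (Set.Icc (0:ℝ) 1))
    (n : ℕ) (hn : 2 ≤ n) :
    μ {ω | brokenCount X n ω = 1} =
      ENNReal.ofReal (1 / ((n : ℝ) * (n + 1)) +
        ∑ j ∈ Finset.Icc 1 (n - 1), (1 : ℝ) / (j * (j + 1) * (j + 2))) := by
  classical
  set Y : Ω → Fin (n+1) → ℝ := fun ω i => X i.1 ω with hYdef
  have hYm : Measurable Y := measurable_Yfun X hmeas (n+1)
  have hmap : μ.map Y = unifPi (n+1) := map_Y_eq μ X hmeas hindep hunif (n+1)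
  have hties : ∀ a b : Fin (n+1), a ≠ b → unifPi (n+1) {x | x a = x b} = 0 :=
    fun a b hab => prod_ties_zero μ X hmeas hindep hunif (n+1) a b hab
  set kA : Fin (n+1) := ⟨n-1, by omega⟩ with hkA
  set SA : Set Ω := Y ⁻¹' topEvt (id : Fin (n+1) → Fin (n+1)) kA with hSAdef
  set SE : ℕ → Set Ω := fun j => Y ⁻¹' topEvt (rE n j hn) ⟨j-1, by omega⟩ with hSEdef
  -- membership characterizations
  have hSAmem : ∀ ω, ω ∈ SA ↔
      ((∀ i, i < n-1 → X i ω < X (n-1) ω) ∧ X (n-1) ω < X n ω) := by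
    intro ω
    simp only [hSAdef, Set.mem_preimage]
    constructor
    · rintro ⟨h1, h2⟩
      refine ⟨fun i hi => ?_, ?_⟩
      · have h3 : Y ω (id ⟨i, by omega⟩) < Y ω (id kA) :=
          h1 ⟨i, by omega⟩ (by rw [hkA]; exact Fin.mk_lt_mk.mpr hi)
        exact h3
      · have h3 : Y ω (id kA) < Y ω (id ⟨n, by omega⟩) :=
          h2 kA ⟨n, by omega⟩ le_rfl (by rw [hkA]; exact Fin.mk_lt_mk.mpr (by omega))
        exact h3
    · rintro ⟨h1, h2⟩
      constructor
      · intro i hik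
        have hiv : i.1 < n-1 := by
          have := Fin.lt_def.mp hik
          simpa [hkA] using this
        exact h1 i.1 hiv
      · intro a b hka hab
        have hb2 := b.2
        have hka' : n-1 ≤ a.1 := by
          have := Fin.le_def.mp hka
          simpa [hkA] using this
        have hab' : a.1 < b.1 := Fin.lt_def.mp hab
        have hav : a.1 = n-1 := by omega
        have hbv : b.1 = n := by omega
        show X a.1 ω < X b.1 ω
        rw [hav, hbv]
        exact h2
  have hSEmem : ∀ j, 1 ≤ j → j ≤ n-1 → ∀ ω, ω ∈ SE j ↔
      ((∀ c, 1 ≤ c → c < j → X (n-1-c) ω < X (n-1) ω) ∧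
        X (n-1) ω < X n ω ∧ X n ω < X (n-1-j) ω) := by
    intro j hj1 hj2 ω
    simp only [hSEdef, Set.mem_preimage]
    have hkval : rEv n j (j-1) = n-1 := rEv_eq_k n j
    constructor
    · rintro ⟨h1, h2⟩
      refine ⟨fun c hc1 hc2 => ?_, ?_, ?_⟩
      · have hlt : c - 1 < j - 1 := by omega
        have h3 : X (rEv n j (c-1)) ω < X (rEv n j (j-1)) ω :=
          h1 ⟨c-1, by omega⟩ (Fin.mk_lt_mk.mpr hlt)
        rw [hkval, rEv_eq_bot n j (c-1) hlt, show n-2-(c-1) = n-1-c by omega] at h3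
        exact h3
      · have h3 : X (rEv n j (j-1)) ω < X (rEv n j j) ω :=
          h2 ⟨j-1, by omega⟩ ⟨j, by omega⟩ le_rfl (Fin.mk_lt_mk.mpr (by omega))
        rw [hkval, rEv_eq_n n j hj1] at h3
        exact h3
      · have h3 : X (rEv n j j) ω < X (rEv n j (j+1)) ω :=
          h2 ⟨j, by omega⟩ ⟨j+1, by omega⟩ (Fin.mk_le_mk.mpr (by omega))
            (Fin.mk_lt_mk.mpr (by omega))
        rw [rEv_eq_n n j hj1, rEv_eq_top n j hj1] at h3
        exact h3
    · rintro ⟨h1, h2, h3⟩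
      constructor
      · intro i hik
        have hiv : i.1 < j-1 := Fin.lt_def.mp hik
        show X (rEv n j i.1) ω < X (rEv n j (j-1)) ω
        rw [hkval, rEv_eq_bot n j i.1 hiv, show n-2-i.1 = n-1-(i.1+1) by omega]
        exact h1 (i.1+1) (by omega) (by omega)
      · intro a b hka hab
        have ha2 := a.2
        have hb2 := b.2
        have hka' : j-1 ≤ a.1 := Fin.le_def.mp hka
        have hab' : a.1 < b.1 := Fin.lt_def.mp hab
        show X (rEv n j a.1) ω < X (rEv n j b.1) ω
        have hacase : a.1 = j-1 ∨ a.1 = j ∨ a.1 = j+1 := by omega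
        have hbcase : b.1 = j-1 ∨ b.1 = j ∨ b.1 = j+1 := by omega
        rcases hacase with ha | ha | ha
        · rcases hbcase with hb | hb | hb
          · exact absurd hab' (by omega)
          · rw [ha, hb, hkval, rEv_eq_n n j hj1]; exact h2
          · rw [ha, hb, hkval, rEv_eq_top n j hj1]; exact h2.trans h3
        · rcases hbcase with hb | hb | hb
          · exact absurd hab' (by omega)
          · exact absurd hab' (by omega)
          · rw [ha, hb, rEv_eq_n n j hj1, rEv_eq_top n j hj1]; exact h3
        · exact absurd hab' (by omega)
  -- almost-sure pairwise distinctness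
  have hae : ∀ᵐ ω ∂μ, ∀ a b : ℕ, a ≤ n → b ≤ n → a ≠ b → X a ω ≠ X b ω := by
    rw [ae_iff]
    have hBad0 : μ (⋃ (a : Fin (n+1)) (b : Fin (n+1)) (_ : a ≠ b),
        {ω | X a.1 ω = X b.1 ω}) = 0 :=
      measure_iUnion_null fun a => measure_iUnion_null fun b =>
        measure_iUnion_null fun hab =>
          ties_zero μ X hmeas hindep hunif a.1 b.1 (fun h => hab (Fin.ext h))
    refine measure_mono_null (fun ω hω => ?_) hBad0
    simp only [Set.mem_setOf_eq] at hω
    push_neg at hω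
    obtain ⟨a, b, ha, hb, hab, heq⟩ := hω
    exact Set.mem_iUnion.2 ⟨⟨a, by omega⟩, Set.mem_iUnion.2 ⟨⟨b, by omega⟩,
      Set.mem_iUnion.2 ⟨fun h => hab (congrArg Fin.val h), heq⟩⟩⟩
  set U : Set Ω := SA ∪ ⋃ j ∈ Finset.Icc 1 (n-1), SE j with hUdef
  have haeeq : {ω | brokenCount X n ω = 1} =ᵐ[μ] U := by
    rw [Filter.eventuallyEq_set]
    filter_upwards [hae] with ω hgood
    constructor
    · intro hB
      rcases broken_cases hn hgood hB with hA | ⟨j, hj1, hj2, hc1, hc2, hc3⟩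
      · exact Or.inl ((hSAmem ω).2 hA)
      · exact Or.inr (Set.mem_biUnion (Finset.mem_Icc.mpr ⟨hj1, hj2⟩)
          ((hSEmem j hj1 hj2 ω).2 ⟨hc1, hc2, hc3⟩))
    · intro hUω
      rcases hUω with hA | hE
      · obtain ⟨h1, h2⟩ := (hSAmem ω).1 hA
        show brokenCount X n ω = 1
        rw [brokenCount, brokenSet_SA hn h1 h2, Set.ncard_singleton]
      · rw [Set.mem_iUnion₂] at hE
        obtain ⟨j, hj, hSEj⟩ := hE
        have hj' := Finset.mem_Icc.mp hj
        obtain ⟨h1, h2, h3⟩ := (hSEmem j hj'.1 hj'.2 ω).1 hSEj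
        show brokenCount X n ω = 1
        rw [brokenCount, brokenSet_SE hn hj'.1 hj'.2 h1 h2 h3, Set.ncard_singleton]
  rw [measure_congr haeeq]
  have hSAm : MeasurableSet SA := hYm (measurableSet_topEvt _ _)
  have hSEm : ∀ j, MeasurableSet (SE j) := fun j => hYm (measurableSet_topEvt _ _)
  have hSESA : ∀ j ∈ Finset.Icc 1 (n-1), ∀ ω, ω ∈ SE j → ω ∉ SA := by
    intro j hj ω hSEω hSAω
    have hj' := Finset.mem_Icc.mp hj
    obtain ⟨h1, h2, h3⟩ := (hSEmem j hj'.1 hj'.2 ω).1 hSEω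
    obtain ⟨g1, g2⟩ := (hSAmem ω).1 hSAω
    have hlt := g1 (n-1-j) (by omega)
    exact absurd (hlt.trans (h2.trans h3)) (lt_irrefl _)
  have hSEdisj : ∀ j ∈ Finset.Icc 1 (n-1), ∀ j' ∈ Finset.Icc 1 (n-1), j < j' →
      ∀ ω, ω ∈ SE j → ω ∉ SE j' := by
    intro j hj j' hj' hlt ω hω hω'
    have hjm := Finset.mem_Icc.mp hj
    have hjm' := Finset.mem_Icc.mp hj'
    obtain ⟨h1, h2, h3⟩ := (hSEmem j hjm.1 hjm.2 ω).1 hω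
    obtain ⟨g1, g2, g3⟩ := (hSEmem j' hjm'.1 hjm'.2 ω).1 hω'
    have hx := g1 j hjm.1 hlt
    exact absurd ((h2.trans h3).trans hx) (lt_irrefl _)
  have hmu : μ U = μ SA + ∑ j ∈ Finset.Icc 1 (n-1), μ (SE j) := by
    rw [hUdef, measure_union ?_ (Finset.measurableSet_biUnion _ fun j _ => hSEm j)]
    · congr 1
      rw [measure_biUnion_finset ?_ fun j _ => hSEm j]
      intro j hj j' hj' hne
      rcases Nat.lt_or_ge j j' with h | h
      · exact Set.disjoint_left.mpr fun ω hω hω' => hSEdisj j hj j' hj' h ω hω hω'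
      · have h2 : j' < j := by omega
        exact Set.disjoint_right.mpr fun ω hω hω' => hSEdisj j' hj' j hj h2 ω hω hω'
    · refine Set.disjoint_left.mpr fun ω hω hω' => ?_
      rw [Set.mem_iUnion₂] at hω'
      obtain ⟨j, hj, hωj⟩ := hω'
      exact hSESA j hj ω hωj hω
  have hmuSA : μ SA = ((n-1)! : ℝ≥0∞) * (((n+1)!) : ℝ≥0∞)⁻¹ := by
    rw [hSAdef, ← Measure.map_apply hYm (measurableSet_topEvt _ _), hmap,
      topEvt_measure _ Function.injective_id kA hties, hkA]
  have hmuSE : ∀ j ∈ Finset.Icc 1 (n-1),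
      μ (SE j) = ((j-1)! : ℝ≥0∞) * (((j+2)!) : ℝ≥0∞)⁻¹ := by
    intro j hj
    have hj' := Finset.mem_Icc.mp hj
    rw [hSEdef]
    rw [← Measure.map_apply hYm (measurableSet_topEvt _ _), hmap,
      topEvt_measure _ (rE_inj hn hj'.1 hj'.2) _ hties]
  rw [hmu, hmuSA, Finset.sum_congr rfl hmuSE]
  rw [enn_nat_div _ _ (Nat.factorial_pos _)]
  have hsum2 : ∀ j ∈ Finset.Icc 1 (n-1),
      ((j-1)! : ℝ≥0∞) * (((j+2)!) : ℝ≥0∞)⁻¹ =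
        ENNReal.ofReal ((((j-1)! : ℕ) : ℝ) / (((j+2)! : ℕ) : ℝ)) :=
    fun j _ => enn_nat_div _ _ (Nat.factorial_pos _)
  rw [Finset.sum_congr rfl hsum2,
    ← ENNReal.ofReal_sum_of_nonneg (fun j _ => by positivity),
    ← ENNReal.ofReal_add (by positivity) (Finset.sum_nonneg fun j _ => by positivity)]
  congr 1
  rw [real_fact_A hn]
  congr 1
  refine Finset.sum_congr rfl fun j hj => ?_
  exact real_fact_E (Finset.mem_Icc.mp hj).1
end

section
/- Fix k ≥ 1 and indices i_k < i_{k-1} < ... < i_1 < i_0 = n-1 with n ≥ k+1. For i.i.d. Uniform(0,1) variables X_0,...,X_n, the probability of the event that X_{i_k} > X_{i_{k-1}} > ... > X_{i_0}, that X_j < X_{i_{p-1}} for all p = 1,...,k and i_p < j < i_{p-1}, and that X_{i_{k-1}} < X_n < X_{i_k}, equals (∏_{p=1}^{k-1} 1/(i_0 - i_p)) · 1/((i_0-i_k)(i_0-i_k+1)(i_0-i_k+2)). -/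
open MeasureTheory ProbabilityTheory
open scoped ENNReal

namespace Stmt13Aux

lemma msetOf_imp {α : Type*} [MeasurableSpace α] (c : Prop) {P : α → Prop}
    (h : MeasurableSet {x | P x}) : MeasurableSet {x | c → P x} := by
  by_cases hc : c
  · simpa [hc] using h
  · simp [hc]

lemma lint_pow (e : ℕ) (c : ℝ) (hc0 : 0 ≤ c) :
    ∫⁻ t in Set.Ico (0:ℝ) c, ENNReal.ofReal (t ^ e) =
      ENNReal.ofReal (c ^ (e + 1)) / ((e + 1 : ℕ) : ℝ≥0∞) := by
  rw [MeasureTheory.setLIntegral_congr (MeasureTheory.Ico_ae_eq_Ioc (μ := volume) (a := (0:ℝ)) (b := c))]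
  have hint : IntegrableOn (fun t : ℝ => t ^ e) (Set.Ioc 0 c) := by
    exact ((continuous_pow e).integrableOn_Icc).mono_set Set.Ioc_subset_Icc_self
  have hnn : 0 ≤ᵐ[volume.restrict (Set.Ioc (0:ℝ) c)] fun t : ℝ => t ^ e := by
    filter_upwards [ae_restrict_mem measurableSet_Ioc] with t ht
    exact pow_nonneg ht.1.le e
  rw [← ofReal_integral_eq_lintegral_ofReal hint hnn]
  have h1 : ∫ t in Set.Ioc (0:ℝ) c, t ^ e = c ^ (e + 1) / ((e : ℝ) + 1) := by
    rw [← intervalIntegral.integral_of_le hc0, integral_pow]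
    simp
  rw [h1, ENNReal.ofReal_div_of_pos (by positivity)]
  congr 1
  rw [show ((e : ℝ) + 1) = ((e + 1 : ℕ) : ℝ) by push_cast; ring, ENNReal.ofReal_natCast]

lemma lint_slice (K : ℝ≥0∞) (e : ℕ) (c : ℝ) (hc : c ∈ Set.Icc (0:ℝ) 1) :
    (∫⁻ t in Set.Icc (0:ℝ) 1, (if t < c then K * ENNReal.ofReal (t ^ e) else 0)) =
      K * ENNReal.ofReal (c ^ (e + 1)) / ((e + 1 : ℕ) : ℝ≥0∞) := by
  have h1 : ∀ t : ℝ, (if t < c then K * ENNReal.ofReal (t ^ e) else 0) =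
      Set.indicator (Set.Iio c) (fun t => K * ENNReal.ofReal (t ^ e)) t := by
    intro t; by_cases h : t < c <;> simp [Set.indicator_apply, Set.mem_Iio, h]
  simp only [h1]
  rw [lintegral_indicator measurableSet_Iio, Measure.restrict_restrict measurableSet_Iio]
  have h2 : Set.Iio c ∩ Set.Icc (0:ℝ) 1 = Set.Ico 0 c := by
    ext x
    simp only [Set.mem_inter_iff, Set.mem_Iio, Set.mem_Icc, Set.mem_Ico]
    constructor
    · rintro ⟨h, h0, _⟩; exact ⟨h0, h⟩
    · rintro ⟨h0, h⟩; exact ⟨h, h0, h.le.trans hc.2⟩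
  rw [h2, lintegral_const_mul K (by fun_prop), lint_pow e c hc.1, mul_div_assoc]

lemma lint_pow_Icc (e : ℕ) :
    (∫⁻ t in Set.Icc (0:ℝ) 1, ENNReal.ofReal (t ^ e)) = (((e + 1 : ℕ) : ℝ≥0∞))⁻¹ := by
  rw [← MeasureTheory.setLIntegral_congr (MeasureTheory.Ico_ae_eq_Icc (μ := volume) (a := (0:ℝ)) (b := 1)),
    lint_pow e 1 zero_le_one]
  simp [one_div]

variable {Ω : Type*} [MeasurableSpace Ω] {μ : Measure Ω} [IsProbabilityMeasure μ]
  {X : ℕ → Ω → ℝ}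

/-- values of `X` on a finset, extended by `0`. -/
noncomputable def extf (X : ℕ → Ω → ℝ) (T : Finset ℕ) (ω : Ω) : ℕ → ℝ :=
  fun j => if j ∈ T then X j ω else 0

lemma extf_meas (hmeas : ∀ m, Measurable (X m)) (T : Finset ℕ) : Measurable (extf X T) := by
  apply measurable_pi_lambda
  intro j
  by_cases h : j ∈ T
  · simpa [extf, h] using hmeas j
  · simpa [extf, h] using measurable_const

lemma extf_indep (hmeas : ∀ m, Measurable (X m))
    (hindep : iIndepFun X μ)
    (S T : Finset ℕ) (hST : Disjoint S T) : IndepFun (extf X S) (extf X T) μ := by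
  classical
  have h := iIndepFun.indepFun_finset S T hST hindep hmeas
  have hφ : ∀ U : Finset ℕ,
      Measurable (fun v : {x // x ∈ U} → ℝ => (fun j => if h : j ∈ U then v ⟨j, h⟩ else 0 : ℕ → ℝ)) := by
    intro U
    apply measurable_pi_lambda
    intro j
    by_cases h : j ∈ U
    · simpa [h] using measurable_pi_apply (⟨j, h⟩ : {x // x ∈ U})
    · simpa [h] using measurable_const
  have h2 := h.comp (hφ S) (hφ T)
  have e1 : ((fun v : {x // x ∈ S} → ℝ => (fun j => if h : j ∈ S then v ⟨j, h⟩ else 0 : ℕ → ℝ)) ∘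
      fun a (i : (S : Finset ℕ)) => X i a) = extf X S := by
    funext ω j
    by_cases h : j ∈ S <;> simp [extf, Function.comp, h]
  have e2 : ((fun v : {x // x ∈ T} → ℝ => (fun j => if h : j ∈ T then v ⟨j, h⟩ else 0 : ℕ → ℝ)) ∘
      fun a (i : (T : Finset ℕ)) => X i a) = extf X T := by
    funext ω j
    by_cases h : j ∈ T <;> simp [extf, Function.comp, h]
  rwa [e1, e2] at h2

lemma peel (hmeas : ∀ m, Measurable (X m))
    (hindep : iIndepFun X μ)
    (hunif : ∀ m, μ.map (X m) = volume.restrict (Set.Icc (0:ℝ) 1))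
    (a : ℕ) (T : Finset ℕ) (ha : a ∉ T) {C : Set (ℝ × (ℕ → ℝ))} (hC : MeasurableSet C) :
    μ {ω | (X a ω, extf X T ω) ∈ C} =
      ∫⁻ t in Set.Icc (0:ℝ) 1, μ {ω | ((t, extf X T ω) : ℝ × (ℕ → ℝ)) ∈ C} := by
  classical
  have hW : Measurable (extf X T) := extf_meas hmeas T
  have hXa : Measurable (X a) := hmeas a
  have h1 : IndepFun (X a) (extf X T) μ := by
    have h := extf_indep hmeas hindep {a} T (by simpa using ha)
    have h2 := h.comp (φ := fun v : ℕ → ℝ => v a) (ψ := id) (_mγ := inferInstance) (_mγ' := inferInstance) (measurable_pi_apply a) measurable_id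
    have e1 : ((fun v : ℕ → ℝ => v a) ∘ extf X ({a} : Finset ℕ)) = X a := by
      funext ω; simp [extf, Function.comp]
    rwa [e1, Function.id_comp] at h2
  haveI : IsProbabilityMeasure (μ.map (extf X T)) := Measure.isProbabilityMeasure_map hW.aemeasurable
  have hmap : μ.map (fun ω => (X a ω, extf X T ω)) = (μ.map (X a)).prod (μ.map (extf X T)) :=
    (indepFun_iff_map_prod_eq_prod_map_map hXa.aemeasurable hW.aemeasurable).mp h1
  calc μ {ω | (X a ω, extf X T ω) ∈ C}
      = μ.map (fun ω => (X a ω, extf X T ω)) C := by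
        rw [Measure.map_apply (hXa.prodMk hW) hC]; rfl
    _ = (μ.map (X a)).prod (μ.map (extf X T)) C := by rw [hmap]
    _ = ∫⁻ t, μ.map (extf X T) (Prod.mk t ⁻¹' C) ∂(μ.map (X a)) := Measure.prod_apply hC
    _ = ∫⁻ t in Set.Icc (0:ℝ) 1, μ {ω | ((t, extf X T ω) : ℝ × (ℕ → ℝ)) ∈ C} := by
        rw [hunif a]
        refine lintegral_congr fun t => ?_
        rw [Measure.map_apply hW (measurable_prodMk_left hC)]
        rfl

lemma split (hmeas : ∀ m, Measurable (X m))
    (hindep : iIndepFun X μ)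
    (S T : Finset ℕ) (hST : Disjoint S T)
    {A B : Set (ℕ → ℝ)} (hA : MeasurableSet A) (hB : MeasurableSet B) :
    μ ({ω | extf X S ω ∈ A} ∩ {ω | extf X T ω ∈ B}) =
      μ {ω | extf X S ω ∈ A} * μ {ω | extf X T ω ∈ B} :=
  (extf_indep hmeas hindep S T hST).measure_inter_preimage_eq_mul A B hA hB

lemma blocks (hmeas : ∀ m, Measurable (X m))
    (hindep : iIndepFun X μ)
    (hunif : ∀ m, μ.map (X m) = volume.restrict (Set.Icc (0:ℝ) 1))
    (t : ℝ) (ht : t ∈ Set.Icc (0:ℝ) 1) (l r : ℕ) :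
    μ {ω | ∀ j, l < j → j < r → X j ω < t} = ENNReal.ofReal t ^ (r - l - 1) := by
  classical
  have hset : {ω | ∀ j, l < j → j < r → X j ω < t} =
      ⋂ j ∈ Finset.Ioo l r, X j ⁻¹' Set.Iio t := by
    ext ω
    simp [Finset.mem_Ioo, Set.mem_iInter]
  have hsingle : ∀ j : ℕ, μ (X j ⁻¹' Set.Iio t) = ENNReal.ofReal t := by
    intro j
    have hm := Measure.map_apply (μ := μ) (hmeas j) (measurableSet_Iio (a := t))
    rw [hunif j] at hm
    rw [← hm, Measure.restrict_apply measurableSet_Iio]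
    have h2 : Set.Iio t ∩ Set.Icc (0:ℝ) 1 = Set.Ico 0 t := by
      ext x
      simp only [Set.mem_inter_iff, Set.mem_Iio, Set.mem_Icc, Set.mem_Ico]
      constructor
      · rintro ⟨h, h0, _⟩; exact ⟨h0, h⟩
      · rintro ⟨h0, h⟩; exact ⟨h, h0, h.le.trans ht.2⟩
    rw [h2, Real.volume_Ico]
    simp
  rw [hset, hindep.measure_inter_preimage_eq_mul (Finset.Ioo l r)
    (fun j _ => measurableSet_Iio)]
  rw [Finset.prod_congr rfl fun j _ => hsingle j, Finset.prod_const, Nat.card_Ioo]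

/-- partial event: chain of indices `i 0, …, i (p-1)`, blocks up to `p`, top value below `c`. -/
def Et (i : ℕ → ℕ) (p : ℕ) (c : ℝ) (v : ℕ → ℝ) : Prop :=
  (∀ q, q + 1 < p → v (i q) < v (i (q + 1))) ∧
  (∀ q, 1 ≤ q → q ≤ p → ∀ j, i q < j → j < i (q - 1) → v j < v (i (q - 1))) ∧
  v (i (p - 1)) < c

lemma i_strict (i : ℕ → ℕ) (k : ℕ) (hdec : ∀ q < k, i (q + 1) < i q) :
    ∀ a b, a < b → b ≤ k → i b < i a := by
  intro a b hab hbk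
  induction b with
  | zero => omega
  | succ m ih =>
    have h1 : i (m + 1) < i m := hdec m (by omega)
    rcases Nat.lt_succ_iff_lt_or_eq.mp hab with h | h
    · exact h1.trans (ih h (by omega))
    · subst h; exact h1

lemma Et_congr {i : ℕ → ℕ} {k p : ℕ} (hdec : ∀ q < k, i (q + 1) < i q)
    (hp : 1 ≤ p) (hpk : p ≤ k) (c : ℝ) {v w : ℕ → ℝ}
    (hvw : ∀ j, i p < j → j ≤ i 0 → v j = w j) :
    Et i p c v ↔ Et i p c w := by
  have hlt : ∀ a b, a < b → b ≤ k → i b < i a := i_strict i k hdec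
  have hle : ∀ a b, a ≤ b → b ≤ k → i b ≤ i a := by
    intro a b h hbk
    rcases h.lt_or_eq with h' | h'
    · exact (hlt a b h' hbk).le
    · rw [h']
  have href : ∀ q, q < p → i p < i q ∧ i q ≤ i 0 := by
    intro q hq
    exact ⟨hlt q p hq hpk, hle 0 q (Nat.zero_le q) (by omega)⟩
  suffices H : ∀ v w : ℕ → ℝ, (∀ j, i p < j → j ≤ i 0 → v j = w j) → Et i p c v → Et i p c w from
    ⟨H v w hvw, H w v fun j h1 h2 => (hvw j h1 h2).symm⟩
  rintro v w hvw ⟨h1, h2, h3⟩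
  refine ⟨fun q hq => ?_, fun q hq1 hq2 j hj1 hj2 => ?_, ?_⟩
  · rw [← hvw (i q) (href q (by omega)).1 (href q (by omega)).2,
      ← hvw (i (q + 1)) (href (q + 1) (by omega)).1 (href (q + 1) (by omega)).2]
    exact h1 q hq
  · have hjp : i p < j := lt_of_le_of_lt (hle q p hq2 hpk) hj1
    have hj0 : j ≤ i 0 := le_trans hj2.le (href (q - 1) (by omega)).2
    rw [← hvw j hjp hj0,
      ← hvw (i (q - 1)) (href (q - 1) (by omega)).1 (href (q - 1) (by omega)).2]
    exact h2 q hq1 hq2 j hj1 hj2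
  · rw [← hvw (i (p - 1)) (href (p - 1) (by omega)).1 (href (p - 1) (by omega)).2]
    exact h3

lemma Et_measurableSet (i : ℕ → ℕ) (p : ℕ) :
    MeasurableSet {x : ℝ × (ℕ → ℝ) | Et i p x.1 x.2} := by
  have hev : ∀ m : ℕ, Measurable fun x : ℝ × (ℕ → ℝ) => x.2 m :=
    fun m => (measurable_pi_apply m).comp measurable_snd
  simp only [Et, Set.setOf_and]
  refine MeasurableSet.inter ?_ (MeasurableSet.inter ?_ ?_)
  · rw [Set.setOf_forall]
    exact MeasurableSet.iInter fun q => msetOf_imp _ (measurableSet_lt (hev _) (hev _))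
  · rw [Set.setOf_forall]
    refine MeasurableSet.iInter fun q => msetOf_imp _ (msetOf_imp _ ?_)
    rw [Set.setOf_forall]
    exact MeasurableSet.iInter fun j =>
      msetOf_imp _ (msetOf_imp _ (measurableSet_lt (hev _) (hev _)))
  · exact measurableSet_lt (hev _) measurable_fst

lemma Bt_measurableSet (l r : ℕ) :
    MeasurableSet {x : ℝ × (ℕ → ℝ) | ∀ j, l < j → j < r → x.2 j < x.1} := by
  have hev : ∀ m : ℕ, Measurable fun x : ℝ × (ℕ → ℝ) => x.2 m :=
    fun m => (measurable_pi_apply m).comp measurable_snd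
  rw [Set.setOf_forall]
  exact MeasurableSet.iInter fun j =>
    msetOf_imp _ (msetOf_imp _ (measurableSet_lt (hev _) measurable_fst))

lemma EtA_measurableSet (i : ℕ → ℕ) (p : ℕ) (t : ℝ) :
    MeasurableSet {v : ℕ → ℝ | Et i p t v} := by
  have : {v : ℕ → ℝ | Et i p t v} =
      (fun v : ℕ → ℝ => ((t, v) : ℝ × (ℕ → ℝ))) ⁻¹' {x : ℝ × (ℕ → ℝ) | Et i p x.1 x.2} := rfl
  rw [this]
  exact (measurable_const.prodMk measurable_id) (Et_measurableSet i p)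

lemma BtA_measurableSet (l r : ℕ) (t : ℝ) :
    MeasurableSet {v : ℕ → ℝ | ∀ j, l < j → j < r → v j < t} := by
  rw [Set.setOf_forall]
  exact MeasurableSet.iInter fun j =>
    msetOf_imp _ (msetOf_imp _ (measurableSet_lt (measurable_pi_apply j) measurable_const))

end Stmt13Aux
open Stmt13Aux
theorem stmt_13 {Ω : Type*} [MeasurableSpace Ω] (μ : Measure Ω) [IsProbabilityMeasure μ]
    (X : ℕ → Ω → ℝ) (hmeas : ∀ m, Measurable (X m))
    (hindep : iIndepFun X μ)
    (hunif : ∀ m, μ.map (X m) = volume.restrict (Set.Icc (0:ℝ) 1))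
    (k n : ℕ) (hk : 1 ≤ k) (hn : k + 1 ≤ n)
    (i : ℕ → ℕ) (hdec : ∀ p < k, i (p + 1) < i p) (hi0 : i 0 = n - 1) :
    μ {ω | (∀ p < k, X (i p) ω < X (i (p + 1)) ω) ∧
           (∀ p, 1 ≤ p → p ≤ k → ∀ j, i p < j → j < i (p - 1) → X j ω < X (i (p - 1)) ω) ∧
           X (i (k - 1)) ω < X n ω ∧ X n ω < X (i k) ω} =
      (∏ p ∈ Finset.Icc 1 (k - 1), (1 : ℝ≥0∞) / ((i 0 - i p : ℕ) : ℝ≥0∞)) *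
        (1 / (((i 0 - i k : ℕ) : ℝ≥0∞) * ((i 0 - i k + 1 : ℕ) : ℝ≥0∞) *
          ((i 0 - i k + 2 : ℕ) : ℝ≥0∞))) := by
  classical
  have hlt : ∀ a b, a < b → b ≤ k → i b < i a := i_strict i k hdec
  have hle : ∀ a b, a ≤ b → b ≤ k → i b ≤ i a := by
    intro a b h hbk
    rcases h.lt_or_eq with h' | h'
    · exact (hlt a b h' hbk).le
    · rw [h']
  have hik0 : i k < i 0 := hlt 0 k hk le_rfl
  have hn0 : i 0 < n := by omega
  have hikn : i k < n := by omega
  -- main induction on the partial events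
  have main : ∀ p, 1 ≤ p → p ≤ k → ∀ c : ℝ, c ∈ Set.Icc (0:ℝ) 1 →
      μ {ω | Et i p c (fun j => X j ω)} =
        (∏ q ∈ Finset.Icc 1 (p - 1), (1:ℝ≥0∞) / ((i 0 - i q : ℕ) : ℝ≥0∞)) *
          ENNReal.ofReal (c ^ (i 0 - i p)) / ((i 0 - i p : ℕ) : ℝ≥0∞) := by
    intro p hp
    induction p, hp using Nat.le_induction with
    | base =>
      intro _ c hc
      have hi10 : i 1 < i 0 := hdec 0 (by omega)
      have hev : {ω | Et i 1 c fun j => X j ω} =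
          {ω | ((X (i 0) ω, extf X (Finset.Ioo (i 1) (i 0)) ω) : ℝ × (ℕ → ℝ)) ∈
            {x : ℝ × (ℕ → ℝ) | (∀ j, i 1 < j → j < i 0 → x.2 j < x.1) ∧ x.1 < c}} := by
        ext ω
        simp only [Set.mem_setOf_eq, Et, extf]
        constructor
        · rintro ⟨h1, h2, h3⟩
          refine ⟨fun j hj1 hj2 => ?_, h3⟩
          rw [if_pos (Finset.mem_Ioo.mpr ⟨hj1, hj2⟩)]
          exact h2 1 le_rfl le_rfl j hj1 hj2
        · rintro ⟨h1, h2⟩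
          refine ⟨fun q hq => absurd hq (by omega), fun q hq1 hq2 j hj1 hj2 => ?_, h2⟩
          have hq : q = 1 := by omega
          subst hq
          have hh := h1 j hj1 hj2
          rwa [if_pos (Finset.mem_Ioo.mpr ⟨hj1, hj2⟩)] at hh
      have hC : MeasurableSet {x : ℝ × (ℕ → ℝ) | (∀ j, i 1 < j → j < i 0 → x.2 j < x.1) ∧ x.1 < c} := by
        rw [Set.setOf_and]
        exact (Bt_measurableSet (i 1) (i 0)).inter (measurableSet_lt measurable_fst measurable_const)
      rw [hev, peel hmeas hindep hunif (i 0) _ (by simp) hC]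
      have hintg : ∀ t ∈ Set.Icc (0:ℝ) 1,
          μ {ω | ((t, extf X (Finset.Ioo (i 1) (i 0)) ω) : ℝ × (ℕ → ℝ)) ∈
            {x : ℝ × (ℕ → ℝ) | (∀ j, i 1 < j → j < i 0 → x.2 j < x.1) ∧ x.1 < c}} =
            if t < c then (1:ℝ≥0∞) * ENNReal.ofReal (t ^ (i 0 - i 1 - 1)) else 0 := by
        intro t ht
        by_cases htc : t < c
        · rw [if_pos htc]
          have he : {ω | ((t, extf X (Finset.Ioo (i 1) (i 0)) ω) : ℝ × (ℕ → ℝ)) ∈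
              {x : ℝ × (ℕ → ℝ) | (∀ j, i 1 < j → j < i 0 → x.2 j < x.1) ∧ x.1 < c}} =
              {ω | ∀ j, i 1 < j → j < i 0 → X j ω < t} := by
            ext ω
            simp only [Set.mem_setOf_eq, htc, and_true, extf]
            refine ⟨fun h j hj1 hj2 => ?_, fun h j hj1 hj2 => ?_⟩
            · have hh := h j hj1 hj2
              rwa [if_pos (Finset.mem_Ioo.mpr ⟨hj1, hj2⟩)] at hh
            · rw [if_pos (Finset.mem_Ioo.mpr ⟨hj1, hj2⟩)]
              exact h j hj1 hj2
          rw [he, blocks hmeas hindep hunif t ht (i 1) (i 0), ← ENNReal.ofReal_pow ht.1, one_mul]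
        · rw [if_neg htc]
          have he : {ω | ((t, extf X (Finset.Ioo (i 1) (i 0)) ω) : ℝ × (ℕ → ℝ)) ∈
              {x : ℝ × (ℕ → ℝ) | (∀ j, i 1 < j → j < i 0 → x.2 j < x.1) ∧ x.1 < c}} = ∅ := by
            ext ω; simp [htc]
          rw [he, measure_empty]
      rw [MeasureTheory.setLIntegral_congr_fun measurableSet_Icc hintg,
        lint_slice 1 (i 0 - i 1 - 1) c hc]
      rw [show i 0 - i 1 - 1 + 1 = i 0 - i 1 by omega]
      rw [show (1:ℕ) - 1 = 0 from rfl, Finset.Icc_eq_empty (by omega), Finset.prod_empty]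
    | succ p hp ih =>
      intro hp1k c hc
      have hpk : p ≤ k := by omega
      have hip : i (p + 1) < i p := hdec p (by omega)
      have hip0 : i p ≤ i 0 := hle 0 p (Nat.zero_le p) hpk
      have hagree : ∀ ω, ∀ j, i p < j → j ≤ i 0 → X j ω = extf X ((Finset.Ioc (i (p + 1)) (i 0)).erase (i p)) ω j := by
        intro ω j hj1 hj2
        simp only [extf]
        rw [if_pos (Finset.mem_erase.mpr ⟨by omega, Finset.mem_Ioc.mpr ⟨by omega, hj2⟩⟩)]
      have hagreeS : ∀ ω, ∀ j, i p < j → j ≤ i 0 → X j ω = extf X (Finset.Ioc (i p) (i 0)) ω j := by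
        intro ω j hj1 hj2
        simp only [extf]
        rw [if_pos (Finset.mem_Ioc.mpr ⟨hj1, hj2⟩)]
      have hagreeB : ∀ ω, ∀ j, i (p + 1) < j → j < i p →
          extf X ((Finset.Ioc (i (p + 1)) (i 0)).erase (i p)) ω j = X j ω := by
        intro ω j hj1 hj2
        simp only [extf]
        rw [if_pos (Finset.mem_erase.mpr ⟨by omega, Finset.mem_Ioc.mpr ⟨hj1, by omega⟩⟩)]
      have hplain : ∀ ω, Et i (p + 1) c (fun j => X j ω) ↔
          (Et i p (X (i p) ω) (fun j => X j ω) ∧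
            (∀ j, i (p + 1) < j → j < i p → X j ω < X (i p) ω) ∧ X (i p) ω < c) := by
        intro ω
        constructor
        · rintro ⟨h1, h2, h3⟩
          refine ⟨⟨fun q hq => h1 q (by omega),
            fun q hq1 hq2 j hj1 hj2 => h2 q hq1 (by omega) j hj1 hj2, ?_⟩,
            fun j hj1 hj2 => ?_, h3⟩
          · have hh := h1 (p - 1) (by omega)
            rwa [show p - 1 + 1 = p by omega] at hh
          · exact h2 (p + 1) (by omega) le_rfl j hj1 hj2
        · rintro ⟨⟨h1, h2, h3⟩, hB, hc'⟩
          refine ⟨fun q hq => ?_, fun q hq1 hq2 j hj1 hj2 => ?_, hc'⟩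
          · by_cases hq' : q + 1 < p
            · exact h1 q hq'
            · have hq'' : q = p - 1 := by omega
              subst hq''
              rw [show p - 1 + 1 = p by omega]
              exact h3
          · by_cases hq' : q ≤ p
            · exact h2 q hq1 hq' j hj1 hj2
            · have hq'' : q = p + 1 := by omega
              subst hq''
              exact hB j hj1 hj2
      have hev : {ω | Et i (p + 1) c fun j => X j ω} =
          {ω | ((X (i p) ω, extf X ((Finset.Ioc (i (p + 1)) (i 0)).erase (i p)) ω) : ℝ × (ℕ → ℝ)) ∈
            {x : ℝ × (ℕ → ℝ) | Et i p x.1 x.2 ∧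
              (∀ j, i (p + 1) < j → j < i p → x.2 j < x.1) ∧ x.1 < c}} := by
        ext ω
        simp only [Set.mem_setOf_eq]
        rw [hplain ω]
        constructor
        · rintro ⟨hEt, hB, hc'⟩
          refine ⟨(Et_congr hdec hp hpk _ (hagree ω)).mp hEt, fun j hj1 hj2 => ?_, hc'⟩
          rw [hagreeB ω j hj1 hj2]
          exact hB j hj1 hj2
        · rintro ⟨hEt, hB, hc'⟩
          refine ⟨(Et_congr hdec hp hpk _ (hagree ω)).mpr hEt, fun j hj1 hj2 => ?_, hc'⟩
          rw [← hagreeB ω j hj1 hj2]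
          exact hB j hj1 hj2
      have hC : MeasurableSet {x : ℝ × (ℕ → ℝ) | Et i p x.1 x.2 ∧
          (∀ j, i (p + 1) < j → j < i p → x.2 j < x.1) ∧ x.1 < c} := by
        rw [Set.setOf_and, Set.setOf_and]
        exact (Et_measurableSet i p).inter
          ((Bt_measurableSet _ _).inter (measurableSet_lt measurable_fst measurable_const))
      rw [hev, peel hmeas hindep hunif (i p) ((Finset.Ioc (i (p + 1)) (i 0)).erase (i p)) (Finset.notMem_erase _ _) hC]
      have hintg : ∀ t ∈ Set.Icc (0:ℝ) 1,
          μ {ω | ((t, extf X ((Finset.Ioc (i (p + 1)) (i 0)).erase (i p)) ω) : ℝ × (ℕ → ℝ)) ∈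
            {x : ℝ × (ℕ → ℝ) | Et i p x.1 x.2 ∧
              (∀ j, i (p + 1) < j → j < i p → x.2 j < x.1) ∧ x.1 < c}} =
            if t < c then
              ((∏ q ∈ Finset.Icc 1 (p - 1), (1:ℝ≥0∞) / ((i 0 - i q : ℕ) : ℝ≥0∞)) *
                (((i 0 - i p : ℕ) : ℝ≥0∞))⁻¹) *
                ENNReal.ofReal (t ^ (i 0 - i p + (i p - i (p + 1) - 1))) else 0 := by
        intro t ht
        by_cases htc : t < c
        · rw [if_pos htc]
          have hsets : {ω | ((t, extf X ((Finset.Ioc (i (p + 1)) (i 0)).erase (i p)) ω) : ℝ × (ℕ → ℝ)) ∈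
              {x : ℝ × (ℕ → ℝ) | Et i p x.1 x.2 ∧
                (∀ j, i (p + 1) < j → j < i p → x.2 j < x.1) ∧ x.1 < c}} =
              ({ω | extf X (Finset.Ioc (i p) (i 0)) ω ∈ {v : ℕ → ℝ | Et i p t v}} ∩
               {ω | extf X (Finset.Ioo (i (p + 1)) (i p)) ω ∈ {v : ℕ → ℝ | ∀ j, i (p + 1) < j → j < i p → v j < t}}) := by
            ext ω
            simp only [Set.mem_setOf_eq, Set.mem_inter_iff, htc, and_true]
            constructor
            · rintro ⟨h1, h2⟩
              refine ⟨(Et_congr hdec hp hpk _ (hagreeS ω)).mp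
                ((Et_congr hdec hp hpk _ (hagree ω)).mpr h1), fun j hj1 hj2 => ?_⟩
              have hh := h2 j hj1 hj2
              rw [hagreeB ω j hj1 hj2] at hh
              simpa [extf, Finset.mem_Ioo, hj1, hj2] using hh
            · rintro ⟨h1, h2⟩
              refine ⟨(Et_congr hdec hp hpk _ (hagree ω)).mp
                ((Et_congr hdec hp hpk _ (hagreeS ω)).mpr h1), fun j hj1 hj2 => ?_⟩
              have hh := h2 j hj1 hj2
              rw [hagreeB ω j hj1 hj2]
              simpa [extf, Finset.mem_Ioo, hj1, hj2] using hh
          rw [hsets, split hmeas hindep (Finset.Ioc (i p) (i 0)) (Finset.Ioo (i (p + 1)) (i p))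
            (by rw [Finset.disjoint_left]
                intro a ha hb
                rw [Finset.mem_Ioc] at ha
                rw [Finset.mem_Ioo] at hb
                omega)
            (EtA_measurableSet i p t) (BtA_measurableSet (i (p + 1)) (i p) t)]
          have hf1 : {ω | extf X (Finset.Ioc (i p) (i 0)) ω ∈ {v : ℕ → ℝ | Et i p t v}} =
              {ω | Et i p t fun j => X j ω} := by
            ext ω
            simp only [Set.mem_setOf_eq]
            exact ((Et_congr hdec hp hpk _ (hagreeS ω))).symm
          have hf2 : {ω | extf X (Finset.Ioo (i (p + 1)) (i p)) ω ∈ {v : ℕ → ℝ | ∀ j, i (p + 1) < j → j < i p → v j < t}} =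
              {ω | ∀ j, i (p + 1) < j → j < i p → X j ω < t} := by
            ext ω
            simp only [Set.mem_setOf_eq]
            refine ⟨fun h j hj1 hj2 => ?_, fun h j hj1 hj2 => ?_⟩
            · have hh := h j hj1 hj2
              simpa [extf, Finset.mem_Ioo, hj1, hj2] using hh
            · simpa [extf, Finset.mem_Ioo, hj1, hj2] using h j hj1 hj2
          rw [hf1, hf2, ih hpk t ht, blocks hmeas hindep hunif t ht (i (p + 1)) (i p)]
          rw [← ENNReal.ofReal_pow ht.1, pow_add,
            ENNReal.ofReal_mul (pow_nonneg ht.1 _), div_eq_mul_inv]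
          ring
        · rw [if_neg htc]
          have he : {ω | ((t, extf X ((Finset.Ioc (i (p + 1)) (i 0)).erase (i p)) ω) : ℝ × (ℕ → ℝ)) ∈
              {x : ℝ × (ℕ → ℝ) | Et i p x.1 x.2 ∧
                (∀ j, i (p + 1) < j → j < i p → x.2 j < x.1) ∧ x.1 < c}} = ∅ := by
            ext ω; simp [htc]
          rw [he, measure_empty]
      rw [MeasureTheory.setLIntegral_congr_fun measurableSet_Icc hintg,
        lint_slice _ _ c hc]
      rw [show i 0 - i p + (i p - i (p + 1) - 1) + 1 = i 0 - i (p + 1) by omega]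
      rw [Nat.add_sub_cancel]
      have hprod : (∏ q ∈ Finset.Icc 1 p, (1:ℝ≥0∞) / ((i 0 - i q : ℕ) : ℝ≥0∞)) =
          (∏ q ∈ Finset.Icc 1 (p - 1), (1:ℝ≥0∞) / ((i 0 - i q : ℕ) : ℝ≥0∞)) *
            ((1:ℝ≥0∞) / ((i 0 - i p : ℕ) : ℝ≥0∞)) := by
        conv_lhs => rw [show p = p - 1 + 1 by omega]
        rw [Finset.prod_Icc_succ_top (by omega)]
        rw [show p - 1 + 1 = p by omega]
      rw [hprod]
      simp only [one_div, div_eq_mul_inv]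
      ring
  -- final assembly
  have hevent : {ω | (∀ p < k, X (i p) ω < X (i (p + 1)) ω) ∧
      (∀ p, 1 ≤ p → p ≤ k → ∀ j, i p < j → j < i (p - 1) → X j ω < X (i (p - 1)) ω) ∧
      X (i (k - 1)) ω < X n ω ∧ X n ω < X (i k) ω} =
      {ω | Et i k (X n ω) (fun j => X j ω) ∧ X n ω < X (i k) ω} := by
    ext ω
    simp only [Set.mem_setOf_eq, Et]
    constructor
    · rintro ⟨h1, h2, h3, h4⟩
      exact ⟨⟨fun q hq => h1 q (by omega), h2, h3⟩, h4⟩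
    · rintro ⟨⟨h1, h2, h3⟩, h4⟩
      refine ⟨fun q hq => ?_, h2, h3, h4⟩
      by_cases hq' : q + 1 < k
      · exact h1 q hq'
      · have hq'' : q = k - 1 := by omega
        subst hq''
        rw [show k - 1 + 1 = k by omega]
        exact h3.trans h4
  set T1 : Finset ℕ := insert n (Finset.Ioc (i k) (i 0)) with hT1
  set T2 : Finset ℕ := Finset.Ioc (i k) (i 0) with hT2
  have hagree1 : ∀ ω, ∀ j, i k < j → j ≤ i 0 → X j ω = extf X T1 ω j := by
    intro ω j hj1 hj2
    simp only [extf]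
    rw [if_pos (Finset.mem_insert_of_mem (Finset.mem_Ioc.mpr ⟨hj1, hj2⟩))]
  have hagree2 : ∀ ω, ∀ j, i k < j → j ≤ i 0 → X j ω = extf X T2 ω j := by
    intro ω j hj1 hj2
    simp only [extf]
    rw [if_pos (Finset.mem_Ioc.mpr ⟨hj1, hj2⟩)]
  have hn' : ∀ ω, extf X T1 ω n = X n ω := by
    intro ω
    simp only [extf]
    rw [if_pos (Finset.mem_insert_self n _)]
  have hev1 : {ω | Et i k (X n ω) (fun j => X j ω) ∧ X n ω < X (i k) ω} =
      {ω | ((X (i k) ω, extf X T1 ω) : ℝ × (ℕ → ℝ)) ∈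
        {x : ℝ × (ℕ → ℝ) | Et i k (x.2 n) x.2 ∧ x.2 n < x.1}} := by
    ext ω
    simp only [Set.mem_setOf_eq, hn' ω]
    constructor
    · rintro ⟨h1, h2⟩
      exact ⟨(Et_congr hdec hk le_rfl _ (hagree1 ω)).mp h1, h2⟩
    · rintro ⟨h1, h2⟩
      exact ⟨(Et_congr hdec hk le_rfl _ (hagree1 ω)).mpr h1, h2⟩
  have hC1 : MeasurableSet {x : ℝ × (ℕ → ℝ) | Et i k (x.2 n) x.2 ∧ x.2 n < x.1} := by
    have hevn : Measurable fun x : ℝ × (ℕ → ℝ) => x.2 n :=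
      (measurable_pi_apply n).comp measurable_snd
    rw [Set.setOf_and]
    refine MeasurableSet.inter ?_ (measurableSet_lt hevn measurable_fst)
    have hpre : {x : ℝ × (ℕ → ℝ) | Et i k (x.2 n) x.2} =
        (fun x : ℝ × (ℕ → ℝ) => ((x.2 n, x.2) : ℝ × (ℕ → ℝ))) ⁻¹'
          {x : ℝ × (ℕ → ℝ) | Et i k x.1 x.2} := rfl
    rw [hpre]
    exact (hevn.prodMk measurable_snd) (Et_measurableSet i k)
  have hiknT1 : i k ∉ T1 := by
    rw [hT1, Finset.mem_insert]
    rintro (h | h)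
    · omega
    · rw [Finset.mem_Ioc] at h
      omega
  rw [hevent, hev1, peel hmeas hindep hunif (i k) T1 hiknT1 hC1]
  have hinner : ∀ u ∈ Set.Icc (0:ℝ) 1,
      μ {ω | ((u, extf X T1 ω) : ℝ × (ℕ → ℝ)) ∈
        {x : ℝ × (ℕ → ℝ) | Et i k (x.2 n) x.2 ∧ x.2 n < x.1}} =
      ((∏ q ∈ Finset.Icc 1 (k - 1), (1:ℝ≥0∞) / ((i 0 - i q : ℕ) : ℝ≥0∞)) *
          (((i 0 - i k : ℕ) : ℝ≥0∞))⁻¹) *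
        ENNReal.ofReal (u ^ (i 0 - i k + 1)) / ((i 0 - i k + 1 : ℕ) : ℝ≥0∞) := by
    intro u hu
    have hev2 : {ω | ((u, extf X T1 ω) : ℝ × (ℕ → ℝ)) ∈
        {x : ℝ × (ℕ → ℝ) | Et i k (x.2 n) x.2 ∧ x.2 n < x.1}} =
        {ω | ((X n ω, extf X T2 ω) : ℝ × (ℕ → ℝ)) ∈
          {x : ℝ × (ℕ → ℝ) | Et i k x.1 x.2 ∧ x.1 < u}} := by
      ext ω
      simp only [Set.mem_setOf_eq, hn' ω]
      constructor
      · rintro ⟨h1, h2⟩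
        exact ⟨(Et_congr hdec hk le_rfl _ (hagree2 ω)).mp
          ((Et_congr hdec hk le_rfl _ (hagree1 ω)).mpr h1), h2⟩
      · rintro ⟨h1, h2⟩
        exact ⟨(Et_congr hdec hk le_rfl _ (hagree1 ω)).mp
          ((Et_congr hdec hk le_rfl _ (hagree2 ω)).mpr h1), h2⟩
    have hC2 : MeasurableSet {x : ℝ × (ℕ → ℝ) | Et i k x.1 x.2 ∧ x.1 < u} := by
      rw [Set.setOf_and]
      exact (Et_measurableSet i k).inter (measurableSet_lt measurable_fst measurable_const)
    have hnT2 : n ∉ T2 := by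
      rw [hT2, Finset.mem_Ioc]
      rintro ⟨-, h⟩
      omega
    rw [hev2, peel hmeas hindep hunif n T2 hnT2 hC2]
    have hintg : ∀ s ∈ Set.Icc (0:ℝ) 1,
        μ {ω | ((s, extf X T2 ω) : ℝ × (ℕ → ℝ)) ∈
          {x : ℝ × (ℕ → ℝ) | Et i k x.1 x.2 ∧ x.1 < u}} =
        if s < u then
          ((∏ q ∈ Finset.Icc 1 (k - 1), (1:ℝ≥0∞) / ((i 0 - i q : ℕ) : ℝ≥0∞)) *
            (((i 0 - i k : ℕ) : ℝ≥0∞))⁻¹) * ENNReal.ofReal (s ^ (i 0 - i k)) else 0 := by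
      intro s hs
      by_cases hsu : s < u
      · rw [if_pos hsu]
        have he : {ω | ((s, extf X T2 ω) : ℝ × (ℕ → ℝ)) ∈
            {x : ℝ × (ℕ → ℝ) | Et i k x.1 x.2 ∧ x.1 < u}} =
            {ω | Et i k s fun j => X j ω} := by
          ext ω
          simp only [Set.mem_setOf_eq, hsu, and_true]
          exact ((Et_congr hdec hk le_rfl _ (hagree2 ω))).symm
        rw [he, main k hk le_rfl s hs, div_eq_mul_inv]
        ring
      · rw [if_neg hsu]
        have he : {ω | ((s, extf X T2 ω) : ℝ × (ℕ → ℝ)) ∈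
            {x : ℝ × (ℕ → ℝ) | Et i k x.1 x.2 ∧ x.1 < u}} = ∅ := by
          ext ω; simp [hsu]
        rw [he, measure_empty]
    rw [MeasureTheory.setLIntegral_congr_fun measurableSet_Icc hintg,
      lint_slice _ _ u hu]
  rw [MeasureTheory.setLIntegral_congr_fun measurableSet_Icc hinner]
  have hconst : ∀ u : ℝ,
      ((∏ q ∈ Finset.Icc 1 (k - 1), (1:ℝ≥0∞) / ((i 0 - i q : ℕ) : ℝ≥0∞)) *
          (((i 0 - i k : ℕ) : ℝ≥0∞))⁻¹) *
        ENNReal.ofReal (u ^ (i 0 - i k + 1)) / ((i 0 - i k + 1 : ℕ) : ℝ≥0∞) =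
      (((∏ q ∈ Finset.Icc 1 (k - 1), (1:ℝ≥0∞) / ((i 0 - i q : ℕ) : ℝ≥0∞)) *
          (((i 0 - i k : ℕ) : ℝ≥0∞))⁻¹) * (((i 0 - i k + 1 : ℕ) : ℝ≥0∞))⁻¹) *
        ENNReal.ofReal (u ^ (i 0 - i k + 1)) := by
    intro u
    rw [div_eq_mul_inv]
    ring
  simp only [hconst]
  rw [lintegral_const_mul _ (by fun_prop), lint_pow_Icc (i 0 - i k + 1)]
  have hd0 : ((i 0 - i k : ℕ) : ℝ≥0∞) ≠ 0 := by
    rw [Ne, Nat.cast_eq_zero]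
    omega
  have hd10 : ((i 0 - i k + 1 : ℕ) : ℝ≥0∞) ≠ 0 := by
    rw [Ne, Nat.cast_eq_zero]
    omega
  rw [show (i 0 - i k + 1 + 1 : ℕ) = (i 0 - i k + 2 : ℕ) by omega]
  rw [one_div, ENNReal.mul_inv (Or.inl (mul_ne_zero hd0 hd10)) (Or.inl
    (ENNReal.mul_ne_top (ENNReal.natCast_ne_top _) (ENNReal.natCast_ne_top _))),
    ENNReal.mul_inv (Or.inl hd0) (Or.inl (ENNReal.natCast_ne_top _))]
  ring
end

section
/- For fixed k ≥ 1 and i_0 = n-1, the sum over all (i_1,...,i_{k-1}) with k-p ≤ i_p ≤ i_{p-1}-1 of (∏_{p=1}^{k-1} 1/(i_0-i_p)) · 1/(2(i_0+1)(i_0+2)) is at most (1+log(n-1))^{k-1} / (2n(n+1)). -/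
/-- The nested sum `∑_{i_p} ∏_p 1/(i0 - i_p)` over the index set
`{(i_p, …, i_{p+r-1}) : k - q ≤ i_q ≤ i_{q-1} - 1}`, computed recursively:
`nestedSum k i0 r p prev` sums over `i_p ∈ [k - p, prev - 1]` the factor
`1/(i0 - i_p)` times the remaining nested sum of depth `r - 1`. -/
noncomputable def nestedSum (k i0 : ℕ) : ℕ → ℕ → ℕ → ℝ
  | 0, _, _ => 1
  | r + 1, p, prev =>
      ∑ ip ∈ Finset.Icc (k - p) (prev - 1),
        (1 : ℝ) / ((i0 - ip : ℕ) : ℝ) * nestedSum k i0 r (p + 1) ip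

lemma sum_inv_le_aux (i0 : ℕ) (hi0 : 1 ≤ i0) (s : Finset ℕ) (hs : s ⊆ Finset.range i0) :
    ∑ ip ∈ s, (1 : ℝ) / ((i0 - ip : ℕ) : ℝ) ≤ 1 + Real.log i0 := by
  calc ∑ ip ∈ s, (1 : ℝ) / ((i0 - ip : ℕ) : ℝ)
      ≤ ∑ ip ∈ Finset.range i0, (1 : ℝ) / ((i0 - ip : ℕ) : ℝ) := by
        apply Finset.sum_le_sum_of_subset_of_nonneg hs
        intro i _ _
        positivity
    _ = ∑ j ∈ Finset.range i0, (1 : ℝ) / ((j + 1 : ℕ) : ℝ) := by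
        rw [← Finset.sum_range_reflect (fun j => (1 : ℝ) / ((j + 1 : ℕ) : ℝ)) i0]
        apply Finset.sum_congr rfl
        intro j hj
        simp only [Finset.mem_range] at hj
        congr 2
        omega
    _ = ((harmonic i0 : ℚ) : ℝ) := by
        rw [harmonic]
        push_cast
        simp [one_div]
    _ ≤ 1 + Real.log i0 := harmonic_le_one_add_log i0

lemma nestedSum_le (k i0 : ℕ) (hi0 : 1 ≤ i0) :
    ∀ r p prev, prev ≤ i0 → nestedSum k i0 r p prev ≤ (1 + Real.log i0) ^ r := by
  intro r
  induction r with
  | zero => intro p prev _; simp [nestedSum]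
  | succ r ih =>
    intro p prev hprev
    have hlog : (0 : ℝ) ≤ 1 + Real.log i0 := by
      have := Real.log_nonneg (by exact_mod_cast hi0 : (1 : ℝ) ≤ (i0 : ℝ))
      linarith
    rw [nestedSum]
    calc ∑ ip ∈ Finset.Icc (k - p) (prev - 1),
          (1 : ℝ) / ((i0 - ip : ℕ) : ℝ) * nestedSum k i0 r (p + 1) ip
        ≤ ∑ ip ∈ Finset.Icc (k - p) (prev - 1),
            (1 : ℝ) / ((i0 - ip : ℕ) : ℝ) * (1 + Real.log i0) ^ r := by
          apply Finset.sum_le_sum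
          intro ip hip
          have hip' : ip ≤ i0 := by
            simp only [Finset.mem_Icc] at hip
            omega
          exact mul_le_mul_of_nonneg_left (ih (p + 1) ip hip') (by positivity)
      _ = (∑ ip ∈ Finset.Icc (k - p) (prev - 1), (1 : ℝ) / ((i0 - ip : ℕ) : ℝ)) *
            (1 + Real.log i0) ^ r := by rw [Finset.sum_mul]
      _ ≤ (1 + Real.log i0) * (1 + Real.log i0) ^ r := by
          apply mul_le_mul_of_nonneg_right _ (pow_nonneg hlog r)
          apply sum_inv_le_aux i0 hi0
          intro x hx
          simp only [Finset.mem_Icc] at hx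
          simp only [Finset.mem_range]
          omega
      _ = (1 + Real.log i0) ^ (r + 1) := (pow_succ' _ _).symm

theorem stmt_14 (k n : ℕ) (hk : 1 ≤ k) (hn : 2 ≤ n) :
    nestedSum k (n - 1) (k - 1) 1 (n - 1) * (1 / (2 * (n : ℝ) * (n + 1))) ≤
      (1 + Real.log ((n - 1 : ℕ) : ℝ)) ^ (k - 1) / (2 * (n : ℝ) * (n + 1)) := by
  have hi0 : 1 ≤ n - 1 := by omega
  have h := nestedSum_le k (n - 1) hi0 (k - 1) 1 (n - 1) le_rfl
  have hpos : (0 : ℝ) ≤ 1 / (2 * (n : ℝ) * (n + 1)) := by positivity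
  exact le_trans (mul_le_mul_of_nonneg_right h hpos)
    (le_of_eq (div_eq_mul_one_div _ _).symm)
end

section
/- Let X_0, X_1, ... be i.i.d. random variables with a continuous distribution, let R_m be the set of Pareto-optimal pairs (i, X_i) among i ≤ m (current records), and let B_n = |R_{n-1} \ R_n| be the number of records broken at time n. Then for every k ≥ 0, P[B_n = k] → 1/2^{k+1} as n → ∞. -/
open MeasureTheory ProbabilityTheory Filter
open scoped ENNReal

section AuxRecords

open Set
open scoped Classical

section Law

variable {Ω : Type*} [MeasurableSpace Ω] (μ : Measure Ω) [IsProbabilityMeasure μ]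
  (X : ℕ → Ω → ℝ)

theorem law_tuple (hmeas : ∀ i, Measurable (X i))
    (hindep : iIndepFun X μ)
    (hident : ∀ i, μ.map (X i) = μ.map (X 0))
    (m : ℕ) (e : Fin m → ℕ) (he : Function.Injective e) :
    μ.map (fun ω (i : Fin m) => X (e i) ω) =
      Measure.pi (fun _ : Fin m => μ.map (X 0)) := by
  have hXm : Measurable (fun ω (i : Fin m) => X (e i) ω) :=
    measurable_pi_lambda _ fun i => hmeas (e i)
  haveI : IsProbabilityMeasure (μ.map (X 0)) :=
    Measure.isProbabilityMeasure_map (hmeas 0).aemeasurable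
  refine (Measure.pi_eq (μ := fun _ : Fin m => μ.map (X 0)) fun s hs => ?_).symm
  rw [Measure.map_apply hXm (MeasurableSet.univ_pi hs)]
  classical
  -- sets on ℕ
  set sets : ℕ → Set ℝ := fun n => ⋂ (i : Fin m) (_ : e i = n), s i with hsets
  have hsets_meas : ∀ n, MeasurableSet (sets n) := by
    intro n
    exact MeasurableSet.iInter fun i => MeasurableSet.iInter fun _ => hs i
  have hsets_e : ∀ i : Fin m, sets (e i) = s i := by
    intro i
    apply Set.Subset.antisymm
    · exact Set.iInter₂_subset (s := fun i' (_ : e i' = e i) => s i') i rfl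
    · intro x hx
      refine Set.mem_iInter₂.2 fun i' hi' => ?_
      rwa [← he hi'] at hx
  have hpre : (fun ω (i : Fin m) => X (e i) ω) ⁻¹' (Set.univ.pi s)
      = ⋂ n ∈ Finset.image e Finset.univ, X n ⁻¹' sets n := by
    ext ω
    simp only [Set.mem_preimage, Set.mem_pi, Set.mem_univ, forall_true_left,
      Set.mem_iInter, Finset.mem_image, Finset.mem_univ, true_and]
    constructor
    · rintro h n ⟨i, rfl⟩
      rw [hsets_e]; exact h i
    · intro h i
      have := h (e i) ⟨i, rfl⟩
      rwa [hsets_e] at this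
  rw [hpre, hindep.measure_inter_preimage_eq_mul _ (fun n _ => hsets_meas n),
    Finset.prod_image (fun i _ j _ h => he h)]
  refine Finset.prod_congr rfl fun i _ => ?_
  rw [← Measure.map_apply (hmeas (e i)) (by rw [hsets_e]; exact hs i), hsets_e, hident]

end Law

section Law2

variable {Ω : Type*} [MeasurableSpace Ω] {μ : Measure Ω} [IsProbabilityMeasure μ]
  {X : ℕ → Ω → ℝ}

theorem exchange (hmeas : ∀ i, Measurable (X i))
    (hindep : iIndepFun X μ)
    (hident : ∀ i, μ.map (X i) = μ.map (X 0))
    (m : ℕ) (e₁ e₂ : ℕ → ℕ)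
    (h₁ : Set.InjOn e₁ (Set.Iio m)) (h₂ : Set.InjOn e₂ (Set.Iio m))
    (S : Set (ℕ → ℝ)) (hS : MeasurableSet S)
    (hdep : ∀ v w : ℕ → ℝ, (∀ a, a < m → v a = w a) → (v ∈ S ↔ w ∈ S)) :
    μ {ω | (fun a => X (e₁ a) ω) ∈ S} = μ {ω | (fun a => X (e₂ a) ω) ∈ S} := by
  classical
  -- extension map
  set ext : (Fin m → ℝ) → (ℕ → ℝ) := fun u a => if h : a < m then u ⟨a, h⟩ else 0 with hext
  have hext_meas : Measurable ext := by
    refine measurable_pi_lambda _ fun a => ?_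
    by_cases h : a < m
    · simpa [hext, h] using measurable_pi_apply (⟨a, h⟩ : Fin m)
    · simpa [hext, h] using measurable_const
  set S' : Set (Fin m → ℝ) := ext ⁻¹' S with hS'
  have hS'meas : MeasurableSet S' := hext_meas hS
  have key : ∀ (v : ℕ → ℝ), v ∈ S ↔ (fun i : Fin m => v i) ∈ S' := by
    intro v
    refine Iff.trans (hdep v (ext fun i : Fin m => v i) ?_) Iff.rfl
    intro a ha
    simp [hext, ha]
  have law : ∀ (e : ℕ → ℕ), Set.InjOn e (Set.Iio m) →
      μ {ω | (fun a => X (e a) ω) ∈ S} = Measure.pi (fun _ : Fin m => μ.map (X 0)) S' := by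
    intro e he
    have hinj : Function.Injective (fun i : Fin m => e i) := by
      intro i j h
      exact Fin.ext (he i.isLt j.isLt h)
    have hXm : Measurable (fun ω (i : Fin m) => X (e i) ω) :=
      measurable_pi_lambda _ fun i => hmeas (e i)
    have : {ω | (fun a => X (e a) ω) ∈ S} = (fun ω (i : Fin m) => X (e i) ω) ⁻¹' S' := by
      ext ω
      exact key _
    rw [this, ← Measure.map_apply hXm hS'meas,
      law_tuple μ X hmeas hindep hident m _ hinj]
  rw [law e₁ h₁, law e₂ h₂]

theorem ties_null (hmeas : ∀ i, Measurable (X i))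
    (hindep : iIndepFun X μ)
    (hident : ∀ i, μ.map (X i) = μ.map (X 0))
    (hcont : ∀ x : ℝ, μ.map (X 0) {x} = 0)
    {a b : ℕ} (hab : a ≠ b) :
    μ {ω | X a ω = X b ω} = 0 := by
  haveI : IsProbabilityMeasure (μ.map (X 0)) :=
    Measure.isProbabilityMeasure_map (hmeas 0).aemeasurable
  have hindepab : IndepFun (X a) (X b) μ := hindep.indepFun hab
  have hmap : μ.map (fun ω => (X a ω, X b ω)) = (μ.map (X a)).prod (μ.map (X b)) :=
    (indepFun_iff_map_prod_eq_prod_map_map (hmeas a).aemeasurable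
      (hmeas b).aemeasurable).mp hindepab
  have hdiag : MeasurableSet {p : ℝ × ℝ | p.1 = p.2} := measurableSet_eq_fun
    measurable_fst measurable_snd
  have : μ {ω | X a ω = X b ω} = μ.map (fun ω => (X a ω, X b ω)) {p : ℝ × ℝ | p.1 = p.2} := by
    rw [Measure.map_apply ((hmeas a).prodMk (hmeas b)) hdiag]
    rfl
  rw [this, hmap, hident a, hident b, Measure.prod_apply hdiag]
  have : ∀ x : ℝ, (μ.map (X 0)) (Prod.mk x ⁻¹' {p : ℝ × ℝ | p.1 = p.2}) = 0 := by
    intro x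
    have : Prod.mk x ⁻¹' {p : ℝ × ℝ | p.1 = p.2} = {x} := by
      ext y
      simp [eq_comm]
    rw [this]
    exact hcont x
  simp [this]
  simp [hcont]

end Law2


open MeasureTheory ProbabilityTheory Filter Set
open scoped ENNReal Classical

/-- `t` is a (strict) prefix record of `v 1, v 2, ...`. -/
def isRec (v : ℕ → ℝ) (t : ℕ) : Prop := 1 ≤ t ∧ ∀ s, 1 ≤ s → s < t → v s < v t

/-- number of records among `v 1, ..., v n` whose value is `≤ v 0`. -/
noncomputable def brkCnt (v : ℕ → ℝ) (n : ℕ) : ℕ :=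
  ((Finset.Icc 1 n).filter (fun t => isRec v t ∧ v t ≤ v 0)).card

/-- number of records among `v 1, ..., v t`. -/
noncomputable def recCnt (v : ℕ → ℝ) (t : ℕ) : ℕ :=
  ((Finset.Icc 1 t).filter (fun s => isRec v s)).card

def Dp (v : ℕ → ℝ) (j t : ℕ) : Prop := isRec v t ∧ recCnt v t = j ∧ v t ≤ v 0

def Ep (v : ℕ → ℝ) (j s t : ℕ) : Prop :=
  isRec v s ∧ recCnt v s = j ∧ s < t ∧ (∀ i, s < i → i < t → v i ≤ v s) ∧
    v s < v t ∧ v s ≤ v 0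

def E'p (v : ℕ → ℝ) (j s t : ℕ) : Prop :=
  isRec v s ∧ recCnt v s = j ∧ s < t ∧ (∀ i, s < i → i < t → v i ≤ v s) ∧
    v s < v t ∧ v t ≤ v 0

def P2p (v : ℕ → ℝ) (j s t : ℕ) : Prop :=
  isRec v s ∧ recCnt v s = j ∧ s < t ∧ (∀ i, s < i → i < t → v i ≤ v s) ∧
    v s < v t ∧ v s ≤ v 0 ∧ v 0 < v t

def E''p (v : ℕ → ℝ) (j s t : ℕ) : Prop :=
  isRec v s ∧ recCnt v s = j ∧ s < t ∧ (∀ i, s < i → i < t → v i ≤ v s) ∧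
    v s < v 0 ∧ v s ≤ v t ∧ v t < v 0

section Pointwise

variable {v w : ℕ → ℝ} {j s t n : ℕ}

lemma isRec_congr (h : ∀ i, 1 ≤ i → i ≤ t → v i = w i) : isRec v t ↔ isRec w t := by
  unfold isRec
  constructor <;> rintro ⟨h1, h2⟩ <;> refine ⟨h1, fun s hs hst => ?_⟩
  · rw [← h s hs (le_of_lt hst), ← h t h1 le_rfl]; exact h2 s hs hst
  · rw [h s hs (le_of_lt hst), h t h1 le_rfl]; exact h2 s hs hst

lemma recCnt_congr (h : ∀ i, 1 ≤ i → i ≤ t → v i = w i) : recCnt v t = recCnt w t := by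
  unfold recCnt
  congr 1
  apply Finset.filter_congr
  intro x hx
  simp only [Finset.mem_Icc] at hx
  exact isRec_congr (fun i hi hix => h i hi (le_trans hix hx.2))

lemma isRec_one : isRec v 1 := ⟨le_rfl, fun s hs hst => by omega⟩

lemma recCnt_le_of_le (h : s ≤ t) : recCnt v s ≤ recCnt v t :=
  Finset.card_le_card (Finset.filter_subset_filter _ (Finset.Icc_subset_Icc le_rfl h))

lemma recCnt_lt_of_rec (ht : isRec v t) (hst : s < t) : recCnt v s < recCnt v t := by
  have hsub : insert t ((Finset.Icc 1 s).filter (fun s => isRec v s)) ⊆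
      (Finset.Icc 1 t).filter (fun s => isRec v s) := by
    intro x hx
    rcases Finset.mem_insert.1 hx with rfl | hx
    · simp only [Finset.mem_filter, Finset.mem_Icc]
      exact ⟨⟨ht.1, le_rfl⟩, ht⟩
    · simp only [Finset.mem_filter, Finset.mem_Icc] at hx ⊢
      exact ⟨⟨hx.1.1, le_trans hx.1.2 (le_of_lt hst)⟩, hx.2⟩
  have hnot : t ∉ (Finset.Icc 1 s).filter (fun s => isRec v s) := by
    simp only [Finset.mem_filter, Finset.mem_Icc]
    omega
  calc recCnt v s < recCnt v s + 1 := Nat.lt_succ_self _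
  _ = (insert t ((Finset.Icc 1 s).filter (fun s => isRec v s))).card := by
      rw [Finset.card_insert_of_notMem hnot, recCnt]
  _ ≤ _ := Finset.card_le_card hsub

lemma Dp_unique (h1 : Dp v j s) (h2 : Dp v j t) : s = t := by
  rcases lt_trichotomy s t with h | h | h
  · exact absurd h2.2.1 (by rw [← h1.2.1]; exact ne_of_gt (recCnt_lt_of_rec h2.1 h))
  · exact h
  · exact absurd h1.2.1 (by rw [← h2.2.1]; exact ne_of_gt (recCnt_lt_of_rec h1.1 h))

lemma counted_initial (ht : isRec v t) (h0 : v t ≤ v 0) (hs : isRec v s) (hst : s ≤ t) :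
    v s ≤ v 0 := by
  rcases eq_or_lt_of_le hst with rfl | h
  · exact h0
  · exact le_of_lt (lt_of_lt_of_le (ht.2 s hs.1 h) h0)

lemma brkCnt_eq_recCnt (ht : isRec v t) (h0 : v t ≤ v 0) : brkCnt v t = recCnt v t := by
  unfold brkCnt recCnt
  congr 1
  apply Finset.filter_congr
  intro x hx
  simp only [Finset.mem_Icc] at hx
  exact ⟨fun h => h.1, fun h => ⟨h, counted_initial ht h0 h hx.2⟩⟩

lemma brkCnt_mono (h : s ≤ n) : brkCnt v s ≤ brkCnt v n :=
  Finset.card_le_card (Finset.filter_subset_filter _ (Finset.Icc_subset_Icc le_rfl h))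

lemma brkCnt_succ : brkCnt v (n + 1) =
    brkCnt v n + (if isRec v (n + 1) ∧ v (n + 1) ≤ v 0 then 1 else 0) := by
  unfold brkCnt
  rw [← Finset.insert_Icc_right_eq_Icc_add_one (by omega), Finset.filter_insert]
  split_ifs with h
  · rw [Finset.card_insert_of_notMem (by simp only [Finset.mem_filter, Finset.mem_Icc]; omega)]
  · ring

lemma L1 (hj : 1 ≤ j) : (∃ n, j ≤ brkCnt v n) ↔ ∃ t, Dp v j t := by
  constructor
  · rintro ⟨n, hn⟩
    have hex : ∃ m, j ≤ brkCnt v m := ⟨n, hn⟩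
    classical
    obtain ⟨m, hm⟩ : ∃ m, Nat.find hex = m + 1 := by
      have htj : j ≤ brkCnt v (Nat.find hex) := Nat.find_spec hex
      rcases Nat.eq_zero_or_pos (Nat.find hex) with h | h
      · exfalso
        rw [h] at htj
        have : brkCnt v 0 = 0 := by unfold brkCnt; simp
        omega
      · exact ⟨Nat.find hex - 1, by omega⟩
    have htj : j ≤ brkCnt v (m + 1) := hm ▸ Nat.find_spec hex
    have hlt : brkCnt v m < j := by
      have := Nat.find_min hex (show m < Nat.find hex by omega)
      omega
    have hcond : isRec v (m + 1) ∧ v (m + 1) ≤ v 0 := by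
      by_contra h
      rw [brkCnt_succ, if_neg h] at htj
      omega
    have heq : brkCnt v (m + 1) = j := by
      rw [brkCnt_succ, if_pos hcond]
      rw [brkCnt_succ, if_pos hcond] at htj
      omega
    exact ⟨m + 1, hcond.1, by rw [← brkCnt_eq_recCnt hcond.1 hcond.2]; exact heq, hcond.2⟩
  · rintro ⟨t, ht, hcnt, h0⟩
    exact ⟨t, by rw [brkCnt_eq_recCnt ht h0, hcnt]⟩

lemma L9 : (∃ n, 1 ≤ brkCnt v n) ↔ v 1 ≤ v 0 := by
  constructor
  · rintro ⟨n, hn⟩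
    obtain ⟨t, ⟨ht, h0⟩⟩ : ∃ t, isRec v t ∧ v t ≤ v 0 := by
      have : ((Finset.Icc 1 n).filter (fun t => isRec v t ∧ v t ≤ v 0)).Nonempty :=
        Finset.card_pos.1 (by unfold brkCnt at hn; omega)
      obtain ⟨t, htm⟩ := this
      simp only [Finset.mem_filter] at htm
      exact ⟨t, htm.2⟩
    exact counted_initial ht h0 isRec_one ht.1
  · intro h
    refine ⟨1, ?_⟩
    have : brkCnt v 1 = recCnt v 1 := brkCnt_eq_recCnt isRec_one h
    unfold recCnt at this
    rw [this]
    rw [show Finset.Icc 1 1 = {1} from rfl]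
    rw [Finset.filter_singleton, if_pos isRec_one]
    simp

end Pointwise

section Pointwise2
variable {v w : ℕ → ℝ} {j s t n : ℕ}

lemma E'_to_D (h : E'p v j s t) : Dp v (j + 1) t := by
  obtain ⟨hs, hcnt, hst, hbtwn, hval, h0⟩ := h
  have hrect : isRec v t := by
    refine ⟨by omega, fun i hi hit => ?_⟩
    rcases lt_trichotomy i s with h | rfl | h
    · exact lt_trans (hs.2 i hi h) hval
    · exact hval
    · exact lt_of_le_of_lt (hbtwn i h hit) hval
  refine ⟨hrect, ?_, h0⟩
  have hfe : (Finset.Icc 1 t).filter (fun r => isRec v r) =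
      insert t ((Finset.Icc 1 s).filter (fun r => isRec v r)) := by
    ext i
    simp only [Finset.mem_filter, Finset.mem_Icc, Finset.mem_insert]
    constructor
    · rintro ⟨⟨hi1, hit⟩, hreci⟩
      rcases eq_or_lt_of_le hit with rfl | hit'
      · exact Or.inl rfl
      · refine Or.inr ⟨⟨hi1, ?_⟩, hreci⟩
        by_contra hcon
        push_neg at hcon
        exact absurd (hreci.2 s hs.1 hcon) (not_lt.2 (hbtwn i hcon hit'))
    · rintro (rfl | ⟨⟨hi1, his⟩, hreci⟩)
      · exact ⟨⟨by omega, le_rfl⟩, hrect⟩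
      · exact ⟨⟨hi1, by omega⟩, hreci⟩
  rw [recCnt, hfe, Finset.card_insert_of_notMem
    (by simp only [Finset.mem_filter, Finset.mem_Icc]; omega), ← recCnt, hcnt]

lemma D_to_E' (hj : 1 ≤ j) (h : Dp v (j + 1) t) : ∃ s, E'p v j s t := by
  obtain ⟨hrect, hcnt, h0⟩ := h
  classical
  set F := ((Finset.Icc 1 t).filter (fun r => isRec v r)).erase t with hF
  have htmem : t ∈ (Finset.Icc 1 t).filter (fun r => isRec v r) := by
    simp only [Finset.mem_filter, Finset.mem_Icc]
    exact ⟨⟨hrect.1, le_rfl⟩, hrect⟩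
  have hFcard : F.card = j := by
    rw [hF, Finset.card_erase_of_mem htmem, ← recCnt, hcnt]
    omega
  have hFne : F.Nonempty := Finset.card_pos.1 (by omega)
  set s := F.max' hFne with hsdef
  have hsF : s ∈ F := F.max'_mem hFne
  have hsprop : (1 ≤ s ∧ s ≤ t) ∧ isRec v s := by
    have := Finset.mem_of_mem_erase hsF
    simpa only [Finset.mem_filter, Finset.mem_Icc] using this
  have hst : s < t := lt_of_le_of_ne hsprop.1.2 (Finset.ne_of_mem_erase hsF)
  have hscnt : recCnt v s = j := by
    rw [← hFcard, recCnt]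
    congr 1
    ext i
    simp only [hF, Finset.mem_filter, Finset.mem_Icc, Finset.mem_erase]
    constructor
    · rintro ⟨⟨hi1, his⟩, hreci⟩
      exact ⟨by omega, ⟨hi1, by omega⟩, hreci⟩
    · rintro ⟨hit, ⟨hi1, hile⟩, hreci⟩
      refine ⟨⟨hi1, ?_⟩, hreci⟩
      refine F.le_max' i ?_
      simp only [hF, Finset.mem_filter, Finset.mem_Icc, Finset.mem_erase]
      exact ⟨hit, ⟨hi1, hile⟩, hreci⟩
  have hbtwn : ∀ i, s < i → i < t → v i ≤ v s := by
    intro i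
    induction i using Nat.strong_induction_on with
    | _ i ih =>
      intro hsi hit
      by_contra hcon
      push_neg at hcon
      have hreci : isRec v i := by
        refine ⟨by omega, fun r hr1 hri => ?_⟩
        rcases lt_trichotomy r s with h | rfl | h
        · exact lt_trans (hsprop.2.2 r hr1 h) hcon
        · exact hcon
        · exact lt_of_le_of_lt (ih r hri h (by omega)) hcon
      have : i ∈ F := by
        simp only [hF, Finset.mem_filter, Finset.mem_Icc, Finset.mem_erase]
        exact ⟨by omega, ⟨by omega, by omega⟩, hreci⟩
      exact absurd (F.le_max' i this) (by omega)
  exact ⟨s, hsprop.2, hscnt, hst, hbtwn, hrect.2 s hsprop.1.1 hst, h0⟩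

lemma E'_pair_unique (h1 : E'p v j s t) (h2 : E'p v j s' t') : s = s' ∧ t = t' := by
  have ht : t = t' := Dp_unique (E'_to_D h1) (E'_to_D h2)
  subst ht
  refine ⟨?_, rfl⟩
  by_contra hne
  rcases lt_or_gt_of_ne hne with h | h
  · exact absurd (h1.2.2.2.1 s' h h2.2.2.1) (not_le.2 (h2.1.2 s h1.1.1 h))
  · exact absurd (h2.2.2.2.1 s h h1.2.2.1) (not_le.2 (h1.1.2 s' h2.1.1 h))

lemma E_to_D (h : Ep v j s t) : Dp v j s := ⟨h.1, h.2.1, h.2.2.2.2.2⟩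

lemma E_pair_unique (h1 : Ep v j s t) (h2 : Ep v j s' t') : s = s' ∧ t = t' := by
  have hs : s = s' := Dp_unique (E_to_D h1) (E_to_D h2)
  subst hs
  refine ⟨rfl, ?_⟩
  by_contra hne
  rcases lt_or_gt_of_ne hne with h | h
  · exact absurd (h2.2.2.2.1 t h1.2.2.1 h) (not_le.2 h1.2.2.2.2.1)
  · exact absurd (h1.2.2.2.1 t' h2.2.2.1 h) (not_le.2 h2.2.2.2.2.1)

lemma D_decomp (h : Dp v j s) : (∀ i, s < i → v i ≤ v s) ∨ ∃ t, Ep v j s t := by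
  by_cases hb : ∀ i, s < i → v i ≤ v s
  · exact Or.inl hb
  · push_neg at hb
    have hex : ∃ t, s < t ∧ v s < v t := hb
    classical
    refine Or.inr ⟨Nat.find hex, h.1, h.2.1, (Nat.find_spec hex).1, ?_,
      (Nat.find_spec hex).2, h.2.2⟩
    intro i hsi hit
    by_contra hcon
    push_neg at hcon
    exact Nat.find_min hex hit ⟨hsi, hcon⟩

lemma D_decomp' (h : Dp v j s) (hnb : ¬ ∀ i, s < i → v i ≤ v s) : ∃ t, Ep v j s t :=
  (D_decomp h).resolve_left hnb

lemma E_iff : Ep v j s t ↔ (E'p v j s t ∨ P2p v j s t) := by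
  constructor
  · rintro ⟨h1, h2, h3, h4, h5, h6⟩
    rcases le_or_gt (v t) (v 0) with h | h
    · exact Or.inl ⟨h1, h2, h3, h4, h5, h⟩
    · exact Or.inr ⟨h1, h2, h3, h4, h5, h6, h⟩
  · rintro (⟨h1, h2, h3, h4, h5, h6⟩ | ⟨h1, h2, h3, h4, h5, h6, h7⟩)
    · exact ⟨h1, h2, h3, h4, h5, le_trans (le_of_lt h5) h6⟩
    · exact ⟨h1, h2, h3, h4, h5, h6⟩

lemma E'_P2_disj (h1 : E'p v j s t) (h2 : P2p v j s t) : False :=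
  absurd h1.2.2.2.2.2 (not_le.2 h2.2.2.2.2.2.2)

lemma E''_sub (h : E''p v j s t) : E'p v j s t ∨ v t = v s := by
  rcases eq_or_lt_of_le h.2.2.2.2.2.1 with heq | hlt
  · exact Or.inr heq.symm
  · exact Or.inl ⟨h.1, h.2.1, h.2.2.1, h.2.2.2.1, hlt, le_of_lt h.2.2.2.2.2.2⟩

lemma E'_sub (h : E'p v j s t) : E''p v j s t ∨ v 0 = v t := by
  rcases eq_or_lt_of_le h.2.2.2.2.2 with heq | hlt
  · exact Or.inr heq.symm
  · exact Or.inl ⟨h.1, h.2.1, h.2.2.1, h.2.2.2.1,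
      lt_trans h.2.2.2.2.1 hlt, le_of_lt h.2.2.2.2.1, hlt⟩

end Pointwise2

section Pointwise3
variable {v w : ℕ → ℝ} {j s t n : ℕ}

lemma brkCnt_dep (h : ∀ a, a ≤ n → v a = w a) : brkCnt v n = brkCnt w n := by
  unfold brkCnt
  congr 1
  apply Finset.filter_congr
  intro x hx
  simp only [Finset.mem_Icc] at hx
  have hrec : isRec v x ↔ isRec w x :=
    isRec_congr (fun i hi hix => h i (le_trans hix hx.2))
  rw [hrec, h x hx.2, h 0 (by omega)]

lemma P2p_dep (h : ∀ a, a ≤ t → v a = w a) : P2p v j s t ↔ P2p w j s t := by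
  unfold P2p
  by_cases hst : s < t
  · have hs : ∀ i, 1 ≤ i → i ≤ s → v i = w i := fun i _ hi => h i (by omega)
    rw [isRec_congr hs, recCnt_congr hs, h s (by omega), h t le_rfl, h 0 (by omega)]
    have hb : (∀ i, s < i → i < t → v i ≤ w s) ↔ (∀ i, s < i → i < t → w i ≤ w s) := by
      constructor <;> intro hb i h1 h2
      · rw [← h i (by omega)]; exact hb i h1 h2
      · rw [h i (by omega)]; exact hb i h1 h2
    rw [hb]
  · constructor <;> rintro ⟨_, _, hst', _⟩ <;> exact absurd hst' hst

lemma P2p_swap (hw : ∀ a, w a = v (Equiv.swap 0 t a)) :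
    P2p w j s t ↔ E''p v j s t := by
  by_cases hst : 1 ≤ s ∧ s < t
  · have ht0 : t ≠ 0 := by omega
    have hfix : ∀ i, 1 ≤ i → i < t → w i = v i := by
      intro i hi hit
      rw [hw i, Equiv.swap_apply_of_ne_of_ne (by omega) (by omega)]
    have hs : ∀ i, 1 ≤ i → i ≤ s → w i = v i := fun i hi his => hfix i hi (by omega)
    have h0 : w 0 = v t := by rw [hw 0, Equiv.swap_apply_left]
    have ht : w t = v 0 := by rw [hw t, Equiv.swap_apply_right]
    have hsv : w s = v s := hs s hst.1 le_rfl
    unfold P2p E''p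
    rw [isRec_congr hs, recCnt_congr hs, h0, ht, hsv]
    have hb : (∀ i, s < i → i < t → w i ≤ v s) ↔ (∀ i, s < i → i < t → v i ≤ v s) := by
      constructor <;> intro hb i h1 h2
      · rw [← hfix i (by omega) h2]; exact hb i h1 h2
      · rw [hfix i (by omega) h2]; exact hb i h1 h2
    rw [hb]
  · push_neg at hst
    constructor
    · rintro ⟨⟨h1, _⟩, _, hst', _⟩
      exact absurd (hst h1) (by omega)
    · rintro ⟨⟨h1, _⟩, _, hst', _⟩
      exact absurd (hst h1) (by omega)

end Pointwise3

section Reversal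
variable {j s t n : ℕ}

lemma broken_eq (v : ℕ → ℝ) (n : ℕ) (hn : 1 ≤ n) :
    Set.ncard {i | (i ≤ n - 1 ∧ ∀ j', i < j' → j' ≤ n - 1 → v j' < v i) ∧
      ¬(i ≤ n ∧ ∀ j', i < j' → j' ≤ n → v j' < v i)} = brkCnt (fun a => v (n - a)) n := by
  classical
  set w : ℕ → ℝ := fun a => v (n - a) with hw
  set T := (Finset.Icc 1 n).filter (fun t => isRec w t ∧ w t ≤ w 0) with hT
  have hset : {i | (i ≤ n - 1 ∧ ∀ j', i < j' → j' ≤ n - 1 → v j' < v i) ∧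
      ¬(i ≤ n ∧ ∀ j', i < j' → j' ≤ n → v j' < v i)} = (fun t => n - t) '' ↑T := by
    ext i
    simp only [Set.mem_setOf_eq, Set.mem_image, Finset.coe_filter, Finset.mem_Icc,
      Set.mem_setOf_eq, hT]
    constructor
    · rintro ⟨⟨hi, hrec⟩, hnot⟩
      have hvn : ¬ v n < v i := by
        intro hc
        apply hnot
        refine ⟨by omega, fun j' hj1 hj2 => ?_⟩
        rcases eq_or_lt_of_le hj2 with rfl | hj3
        · exact hc
        · exact hrec j' hj1 (by omega)
      refine ⟨n - i, ⟨⟨by omega, by omega⟩, ⟨by omega, fun s hs1 hst => ?_⟩, ?_⟩, by omega⟩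
      · show v (n - s) < v (n - (n - i))
        have h1 : n - (n - i) = i := by omega
        rw [h1]
        exact hrec (n - s) (by omega) (by omega)
      · show v (n - (n - i)) ≤ v (n - 0)
        have h1 : n - (n - i) = i := by omega
        have h2 : n - 0 = n := by omega
        rw [h1, h2]
        exact not_lt.1 hvn
    · rintro ⟨t, ⟨⟨ht1, htn⟩, ⟨_, hrec⟩, hle⟩, rfl⟩
      have hval : w t ≤ w 0 := hle
      have hwt : w t = v (n - t) := rfl
      have hw0 : w 0 = v (n - 0) := rfl
      constructor
      · refine ⟨by omega, fun j' hj1 hj2 => ?_⟩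
        have := hrec (n - j') (by omega) (by omega)
        show v j' < v (n - t)
        have h1 : n - (n - j') = j' := by omega
        calc v j' = w (n - j') := by show v j' = v (n - (n - j')); rw [h1]
        _ < w t := this
        _ = v (n - t) := rfl
      · rintro ⟨_, hall⟩
        have h1 : v n < v (n - t) := hall n (by omega) le_rfl
        have h2 : v (n - t) ≤ v n := by
          have := hval
          rw [hwt, hw0] at this
          simpa using this
        exact absurd h1 (not_lt.2 h2)
  rw [hset, Set.ncard_image_of_injOn, Set.ncard_coe_finset]
  · rfl
  · intro a ha b hb hab
    simp only [Finset.coe_filter, Finset.mem_Icc, Set.mem_setOf_eq, hT] at ha hb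
    have hab' : n - a = n - b := hab
    omega

end Reversal

section Meas
variable {j s t n : ℕ}

lemma meas_vlt (a b : ℕ) : MeasurableSet {v : ℕ → ℝ | v a < v b} :=
  measurableSet_lt (measurable_pi_apply a) (measurable_pi_apply b)

lemma meas_vle (a b : ℕ) : MeasurableSet {v : ℕ → ℝ | v a ≤ v b} :=
  measurableSet_le (measurable_pi_apply a) (measurable_pi_apply b)

lemma meas_const_prop (p : Prop) : MeasurableSet {v : ℕ → ℝ | p} := by
  by_cases h : p
  · simp [h]
  · simp [h]

lemma meas_isRec (t : ℕ) : MeasurableSet {v : ℕ → ℝ | isRec v t} := by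
  have : {v : ℕ → ℝ | isRec v t} = {v : ℕ → ℝ | 1 ≤ t} ∩
      ⋂ (s : ℕ), ⋂ (_ : 1 ≤ s), ⋂ (_ : s < t), {v : ℕ → ℝ | v s < v t} := by
    ext v
    simp only [Set.mem_inter_iff, Set.mem_setOf_eq, Set.mem_iInter, isRec]
  rw [this]
  exact (meas_const_prop _).inter (MeasurableSet.iInter fun s => MeasurableSet.iInter fun _ =>
    MeasurableSet.iInter fun _ => meas_vlt s t)

lemma meas_recCnt (t : ℕ) : Measurable fun v : ℕ → ℝ => recCnt v t := by
  have : (fun v : ℕ → ℝ => recCnt v t) =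
      fun v => ∑ s ∈ Finset.Icc 1 t, if isRec v s then 1 else 0 := by
    funext v
    rw [recCnt, Finset.card_filter]
  rw [this]
  exact Finset.measurable_sum _ fun s _ =>
    Measurable.ite (meas_isRec s) measurable_const measurable_const

lemma meas_brkCnt (n : ℕ) : Measurable fun v : ℕ → ℝ => brkCnt v n := by
  have : (fun v : ℕ → ℝ => brkCnt v n) =
      fun v => ∑ s ∈ Finset.Icc 1 n, if isRec v s ∧ v s ≤ v 0 then 1 else 0 := by
    funext v
    rw [brkCnt, Finset.card_filter]
  rw [this]
  refine Finset.measurable_sum _ fun s _ => Measurable.ite ?_ measurable_const measurable_const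
  exact ((meas_isRec s).inter (meas_vle s 0))

lemma meas_Dp : MeasurableSet {v : ℕ → ℝ | Dp v j t} := by
  have : {v : ℕ → ℝ | Dp v j t} = {v : ℕ → ℝ | isRec v t} ∩
      ((fun v : ℕ → ℝ => recCnt v t) ⁻¹' {j}) ∩ {v : ℕ → ℝ | v t ≤ v 0} := by
    ext v
    simp only [Dp, Set.mem_inter_iff, Set.mem_setOf_eq, Set.mem_preimage,
      Set.mem_singleton_iff]
    tauto
  rw [this]
  exact ((meas_isRec t).inter (meas_recCnt t (measurableSet_singleton j))).inter (meas_vle t 0)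

lemma meas_core : MeasurableSet {v : ℕ → ℝ | isRec v s ∧ recCnt v s = j ∧ s < t ∧
    (∀ i, s < i → i < t → v i ≤ v s) ∧ v s < v t} := by
  have : {v : ℕ → ℝ | isRec v s ∧ recCnt v s = j ∧ s < t ∧
      (∀ i, s < i → i < t → v i ≤ v s) ∧ v s < v t} =
      {v : ℕ → ℝ | isRec v s} ∩ ((fun v : ℕ → ℝ => recCnt v s) ⁻¹' {j}) ∩
      {v : ℕ → ℝ | s < t} ∩
      (⋂ (i : ℕ), ⋂ (_ : s < i), ⋂ (_ : i < t), {v : ℕ → ℝ | v i ≤ v s}) ∩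
      {v : ℕ → ℝ | v s < v t} := by
    ext v
    simp only [Set.mem_inter_iff, Set.mem_setOf_eq, Set.mem_preimage, Set.mem_singleton_iff,
      Set.mem_iInter]
    tauto
  rw [this]
  exact ((((meas_isRec s).inter (meas_recCnt s (measurableSet_singleton j))).inter
    (meas_const_prop _)).inter (MeasurableSet.iInter fun i => MeasurableSet.iInter fun _ =>
      MeasurableSet.iInter fun _ => meas_vle i s)).inter (meas_vlt s t)

lemma meas_Ep : MeasurableSet {v : ℕ → ℝ | Ep v j s t} := by
  have : {v : ℕ → ℝ | Ep v j s t} = {v : ℕ → ℝ | isRec v s ∧ recCnt v s = j ∧ s < t ∧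
      (∀ i, s < i → i < t → v i ≤ v s) ∧ v s < v t} ∩ {v : ℕ → ℝ | v s ≤ v 0} := by
    ext v
    simp only [Ep, Set.mem_inter_iff, Set.mem_setOf_eq]
    tauto
  rw [this]
  exact meas_core.inter (meas_vle s 0)

lemma meas_E'p : MeasurableSet {v : ℕ → ℝ | E'p v j s t} := by
  have : {v : ℕ → ℝ | E'p v j s t} = {v : ℕ → ℝ | isRec v s ∧ recCnt v s = j ∧ s < t ∧
      (∀ i, s < i → i < t → v i ≤ v s) ∧ v s < v t} ∩ {v : ℕ → ℝ | v t ≤ v 0} := by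
    ext v
    simp only [E'p, Set.mem_inter_iff, Set.mem_setOf_eq]
    tauto
  rw [this]
  exact meas_core.inter (meas_vle t 0)

lemma meas_P2p : MeasurableSet {v : ℕ → ℝ | P2p v j s t} := by
  have : {v : ℕ → ℝ | P2p v j s t} = {v : ℕ → ℝ | isRec v s ∧ recCnt v s = j ∧ s < t ∧
      (∀ i, s < i → i < t → v i ≤ v s) ∧ v s < v t} ∩
      ({v : ℕ → ℝ | v s ≤ v 0} ∩ {v : ℕ → ℝ | v 0 < v t}) := by
    ext v
    simp only [P2p, Set.mem_inter_iff, Set.mem_setOf_eq]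
    tauto
  rw [this]
  exact meas_core.inter ((meas_vle s 0).inter (meas_vlt 0 t))

end Meas

section Helpers

lemma measure_eq_of_symmdiff_null {α : Type*} [MeasurableSpace α] {μ : Measure α}
    {A B N1 N2 : Set α} (h1 : A \ B ⊆ N1) (h2 : B \ A ⊆ N2)
    (hN1 : μ N1 = 0) (hN2 : μ N2 = 0) : μ A = μ B := by
  apply le_antisymm
  · calc μ A ≤ μ (B ∪ (A \ B)) := measure_mono (fun x hx => by
        by_cases h : x ∈ B
        · exact Or.inl h
        · exact Or.inr ⟨hx, h⟩)
    _ ≤ μ B + μ (A \ B) := measure_union_le _ _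
    _ ≤ μ B + μ N1 := add_le_add_right (measure_mono h1) _
    _ = μ B := by rw [hN1, add_zero]
  · calc μ B ≤ μ (A ∪ (B \ A)) := measure_mono (fun x hx => by
        by_cases h : x ∈ A
        · exact Or.inl h
        · exact Or.inr ⟨hx, h⟩)
    _ ≤ μ A + μ (B \ A) := measure_union_le _ _
    _ ≤ μ A + μ N2 := add_le_add_right (measure_mono h2) _
    _ = μ A := by rw [hN2, add_zero]

end Helpers

section NullBound

variable {Ω : Type*} [MeasurableSpace Ω] {μ : Measure Ω} [IsProbabilityMeasure μ]
  {X : ℕ → Ω → ℝ}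

theorem null_bound (hmeas : ∀ i, Measurable (X i))
    (hindep : iIndepFun X μ)
    (hident : ∀ i, μ.map (X i) = μ.map (X 0))
    (hcont : ∀ x : ℝ, μ.map (X 0) {x} = 0) (s : ℕ) :
    μ {ω | ∀ i, s < i → X i ω ≤ X s ω} = 0 := by
  classical
  set B := {ω | ∀ i, s < i → X i ω ≤ X s ω} with hB
  have key : ∀ m : ℕ, μ B ≤ 1 / (m + 1) := by
    intro m
    set S : Set (ℕ → ℝ) := {v | ∀ r, r ≤ m → r ≠ 0 → v r < v 0} with hS
    have hSmeas : MeasurableSet S := by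
      have hSi : S = ⋂ (r : ℕ), ⋂ (_ : r ≤ m), ⋂ (_ : r ≠ 0), {v : ℕ → ℝ | v r < v 0} := by
        ext v; simp only [hS, Set.mem_setOf_eq, Set.mem_iInter]
      rw [hSi]
      exact MeasurableSet.iInter fun r => MeasurableSet.iInter fun _ =>
        MeasurableSet.iInter fun _ => meas_vlt r 0
    have hSdep : ∀ v w : ℕ → ℝ, (∀ a, a < m + 1 → v a = w a) → (v ∈ S ↔ w ∈ S) := by
      intro v w h
      simp only [hS, Set.mem_setOf_eq]
      constructor <;> intro hv r hr hr0
      · rw [← h r (by omega), ← h 0 (by omega)]; exact hv r hr hr0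
      · rw [h r (by omega), h 0 (by omega)]; exact hv r hr hr0
    set V : ℕ → Set Ω := fun c => {ω | ∀ r, r ≤ m → r ≠ c → X (s + r) ω < X (s + c) ω} with hV
    have hVmeas : ∀ c, MeasurableSet (V c) := by
      intro c
      have : V c = ⋂ (r : ℕ), ⋂ (_ : r ≤ m), ⋂ (_ : r ≠ c),
          {ω | X (s + r) ω < X (s + c) ω} := by
        ext ω; simp only [hV, Set.mem_setOf_eq, Set.mem_iInter]
      rw [this]
      exact MeasurableSet.iInter fun r => MeasurableSet.iInter fun _ =>
        MeasurableSet.iInter fun _ => measurableSet_lt (hmeas _) (hmeas _)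
    have hVdisj : ∀ c c', c ≤ m → c' ≤ m → c ≠ c' → Disjoint (V c) (V c') := by
      intro c c' hc hc' hne
      rw [Set.disjoint_left]
      intro ω h1 h2
      exact absurd (h1 c' hc' (Ne.symm hne)) (not_lt.2 (le_of_lt (h2 c hc hne)))
    have hVeq : ∀ c, c ≤ m → μ (V c) = μ (V 0) := by
      intro c hc
      rcases Nat.eq_zero_or_pos c with rfl | hcpos
      · rfl
      have hσ0 : (Equiv.swap 0 c) 0 = c := Equiv.swap_apply_left 0 c
      have hσc : (Equiv.swap 0 c) c = 0 := Equiv.swap_apply_right 0 c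
      have hσfix : ∀ r : ℕ, r ≠ 0 → r ≠ c → (Equiv.swap 0 c) r = r := fun r h0 h1 =>
        Equiv.swap_apply_of_ne_of_ne h0 h1
      have hσle : ∀ r : ℕ, r ≤ m → (Equiv.swap 0 c) r ≤ m := by
        intro r hr
        by_cases h0 : r = 0
        · subst h0; rw [hσ0]; exact hc
        by_cases h1 : r = c
        · subst h1; rw [hσc]; omega
        · rw [hσfix r h0 h1]; exact hr
      have he := exchange hmeas hindep hident (m + 1)
        (fun a => s + (Equiv.swap 0 c a)) (fun a => s + a)
        (by intro a _ b _ hab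
            have hab' : s + Equiv.swap 0 c a = s + Equiv.swap 0 c b := hab
            have h2 : Equiv.swap 0 c a = Equiv.swap 0 c b := by omega
            exact (Equiv.swap 0 c).injective h2)
        (by intro a _ b _ hab
            have hab' : s + a = s + b := hab
            omega) S hSmeas hSdep
      have hL : {ω | (fun a => X (s + (Equiv.swap 0 c a)) ω) ∈ S} = V c := by
        ext ω
        simp only [hS, hV, Set.mem_setOf_eq]
        constructor
        · intro h r' hr' hr'c
          have hr : (Equiv.swap 0 c) r' ≤ m := hσle r' hr'
          have hr0 : (Equiv.swap 0 c) r' ≠ 0 := by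
            intro hh
            exact hr'c ((Equiv.swap 0 c).injective (by rw [hh, hσc]))
          have := h ((Equiv.swap 0 c) r') hr hr0
          rwa [Equiv.swap_apply_self, hσ0] at this
        · intro h r hr hr0
          have hrle : (Equiv.swap 0 c) r ≤ m := hσle r hr
          have hrc : (Equiv.swap 0 c) r ≠ c := by
            intro hh
            exact hr0 ((Equiv.swap 0 c).injective (by rw [hh, hσ0]))
          have := h ((Equiv.swap 0 c) r) hrle hrc
          rwa [hσ0]
      have hR : {ω | (fun a => X (s + a) ω) ∈ S} = V 0 := by
        ext ω
        simp only [hS, hV, Set.mem_setOf_eq]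
      rw [hL, hR] at he
      exact he
    have hsum : ∑ c ∈ Finset.range (m + 1), μ (V c) ≤ 1 := by
      rw [← measure_biUnion_finset
        (fun c hc c' hc' hne => hVdisj c c' (by simpa [Nat.lt_succ_iff] using hc)
          (by simpa [Nat.lt_succ_iff] using hc') hne) (fun c _ => hVmeas c)]
      exact prob_le_one
    have hmul : ((m : ℝ≥0∞) + 1) * μ (V 0) ≤ 1 := by
      have : ∑ c ∈ Finset.range (m + 1), μ (V c) =
          ∑ _c ∈ Finset.range (m + 1), μ (V 0) :=
        Finset.sum_congr rfl fun c hc => hVeq c (by simpa [Nat.lt_succ_iff] using hc)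
      rw [this, Finset.sum_const, Finset.card_range, nsmul_eq_mul] at hsum
      calc ((m : ℝ≥0∞) + 1) * μ (V 0) = ((m + 1 : ℕ) : ℝ≥0∞) * μ (V 0) := by push_cast; ring
      _ ≤ 1 := hsum
    have hBV : μ B ≤ μ (V 0) := by
      have hsub : B \ V 0 ⊆ ⋃ (r : ℕ), ⋃ (_ : 1 ≤ r), {ω | X (s + r) ω = X s ω} := by
        rintro ω ⟨hBm, hVm⟩
        simp only [hV, Set.mem_setOf_eq, not_forall] at hVm
        obtain ⟨r, hr, hr0, hlt⟩ := hVm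
        have hle : X (s + r) ω ≤ X s ω := hBm (s + r) (by omega)
        have heq : X (s + r) ω = X s ω := by
          refine le_antisymm hle (not_lt.1 ?_)
          intro hcc
          exact hlt (by simpa using hcc)
        exact Set.mem_iUnion.2 ⟨r, Set.mem_iUnion.2 ⟨by omega, heq⟩⟩
      have hties : μ (⋃ (r : ℕ), ⋃ (_ : 1 ≤ r), {ω | X (s + r) ω = X s ω}) = 0 := by
        refine measure_iUnion_null fun r => ?_
        refine measure_iUnion_null fun hr => ?_
        exact ties_null hmeas hindep hident hcont (by omega)
      calc μ B ≤ μ (V 0 ∪ (B \ V 0)) := measure_mono (fun x hx => by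
            by_cases h : x ∈ V 0
            · exact Or.inl h
            · exact Or.inr ⟨hx, h⟩)
      _ ≤ μ (V 0) + μ (B \ V 0) := measure_union_le _ _
      _ ≤ μ (V 0) + 0 := by
          refine add_le_add_right ?_ _
          rw [← hties]
          exact measure_mono hsub
      _ = μ (V 0) := add_zero _
    refine le_trans hBV ?_
    have hne0 : ((m : ℝ≥0∞) + 1) ≠ 0 := by
      intro h
      rw [add_eq_zero] at h
      exact one_ne_zero h.2
    rw [ENNReal.le_div_iff_mul_le (Or.inl hne0) (Or.inl (by simp))]
    rw [mul_comm]
    exact hmul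
  by_contra hne
  obtain ⟨n, hn⟩ := ENNReal.exists_inv_nat_lt hne
  have h1 : μ B ≤ 1 / (n + 1) := key n
  have h2 : (1 : ℝ≥0∞) / ((n : ℝ≥0∞) + 1) ≤ (n : ℝ≥0∞)⁻¹ := by
    rw [one_div]
    exact ENNReal.inv_le_inv.2 (by simp)
  exact absurd (lt_of_le_of_lt (le_trans h1 h2) hn) (lt_irrefl _)

end NullBound

section MainU

variable {Ω : Type*} [MeasurableSpace Ω] {μ : Measure Ω} [IsProbabilityMeasure μ]
  {X : ℕ → Ω → ℝ}

theorem measure_U (hmeas : ∀ i, Measurable (X i))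
    (hindep : iIndepFun X μ)
    (hident : ∀ i, μ.map (X i) = μ.map (X 0))
    (hcont : ∀ x : ℝ, μ.map (X 0) {x} = 0) :
    ∀ j, μ (⋃ n, {ω | j ≤ brkCnt (fun a => X a ω) n}) = 2⁻¹ ^ j := by
  classical
  set π : Ω → (ℕ → ℝ) := fun ω a => X a ω with hπdef
  have hπ : Measurable π := measurable_pi_lambda _ fun a => hmeas a
  set U : ℕ → Set Ω := fun j => ⋃ n, {ω | j ≤ brkCnt (π ω) n} with hUdef
  set sD : ℕ → ℕ → Set Ω := fun j t => {ω | Dp (π ω) j t} with hsDdef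
  set sE : ℕ → ℕ → ℕ → Set Ω := fun j s t => {ω | Ep (π ω) j s t} with hsEdef
  set sE' : ℕ → ℕ → ℕ → Set Ω := fun j s t => {ω | E'p (π ω) j s t} with hsE'def
  set sP2 : ℕ → ℕ → ℕ → Set Ω := fun j s t => {ω | P2p (π ω) j s t} with hsP2def
  have hDmeas : ∀ j t, MeasurableSet (sD j t) := fun j t => hπ meas_Dp
  have hEmeas : ∀ j s t, MeasurableSet (sE j s t) := fun j s t => hπ meas_Ep
  have hE'meas : ∀ j s t, MeasurableSet (sE' j s t) := fun j s t => hπ meas_E'p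
  have hP2meas : ∀ j s t, MeasurableSet (sP2 j s t) := fun j s t => hπ meas_P2p
  -- U j as a union of the D-sets
  have hU_D : ∀ j, 1 ≤ j → U j = ⋃ t, sD j t := by
    intro j hj
    ext ω
    simp only [hUdef, hsDdef, Set.mem_iUnion, Set.mem_setOf_eq]
    exact L1 hj
  -- disjointness
  have hDdisj : ∀ j, Pairwise (Function.onFun Disjoint fun t => sD j t) := by
    intro j a b hne
    simp only [Function.onFun]
    rw [Set.disjoint_left]
    intro ω ha hb
    exact hne (Dp_unique ha hb)
  have hEdisj : ∀ j s, Pairwise (Function.onFun Disjoint fun t => sE j s t) := by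
    intro j s a b hne
    simp only [Function.onFun]
    rw [Set.disjoint_left]
    intro ω ha hb
    exact hne (E_pair_unique ha hb).2
  have hE'disj : ∀ j t, Pairwise (Function.onFun Disjoint fun s => sE' j s t) := by
    intro j t a b hne
    simp only [Function.onFun]
    rw [Set.disjoint_left]
    intro ω ha hb
    exact hne (E'_pair_unique ha hb).1
  -- step 1 : decompose D along the next record
  have h2 : ∀ j s, μ (sD j s) = ∑' t, μ (sE j s t) := by
    intro j s
    have hsub : (⋃ t, sE j s t) ⊆ sD j s := Set.iUnion_subset fun t ω h => E_to_D h
    have hdiff : sD j s \ (⋃ t, sE j s t) ⊆ {ω | ∀ r, s < r → X r ω ≤ X s ω} := by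
      rintro ω ⟨hD, hnE⟩
      rcases D_decomp hD with hall | ⟨t, hEt⟩
      · exact hall
      · exact absurd (Set.mem_iUnion.2 ⟨t, hEt⟩) hnE
    have hmeq : μ (sD j s) = μ (⋃ t, sE j s t) :=
      measure_eq_of_symmdiff_null hdiff (fun x hx => absurd (hsub hx.1) hx.2)
        (by
          have := null_bound hmeas hindep hident hcont s
          exact le_antisymm (le_trans (measure_mono (fun x hx => hx)) this.le) zero_le)
        (measure_empty)
    rw [hmeq, measure_iUnion (hEdisj j s) (hEmeas j s)]
  -- step 2 : split E into E' and P2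
  have hsplit : ∀ j s t, μ (sE j s t) = μ (sE' j s t) + μ (sP2 j s t) := by
    intro j s t
    have hun : sE j s t = sE' j s t ∪ sP2 j s t := by
      ext ω
      simp only [hsEdef, hsE'def, hsP2def, Set.mem_union, Set.mem_setOf_eq]
      exact E_iff
    have hdis : Disjoint (sE' j s t) (sP2 j s t) := by
      rw [Set.disjoint_left]
      intro ω h1 h2
      exact E'_P2_disj h1 h2
    rw [hun, measure_union hdis (hP2meas j s t)]
  -- step 3 : μ (sP2) = μ (sE')
  have hP2E' : ∀ j s t, μ (sP2 j s t) = μ (sE' j s t) := by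
    intro j s t
    by_cases hst : 1 ≤ s ∧ s < t
    · have ht0 : t ≠ 0 := by omega
      have hts : t ≠ s := by omega
      -- exchange coordinates 0 and t
      have hSdep : ∀ v w : ℕ → ℝ, (∀ a, a < t + 1 → v a = w a) →
          (v ∈ {v : ℕ → ℝ | P2p v j s t} ↔ w ∈ {v : ℕ → ℝ | P2p v j s t}) := by
        intro v w h
        simp only [Set.mem_setOf_eq]
        exact P2p_dep (fun a ha => h a (by omega))
      have he := exchange hmeas hindep hident (t + 1) (fun a => a)
        (fun a => (Equiv.swap 0 t) a)
        (fun a _ b _ hab => hab)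
        (by intro a _ b _ hab
            exact (Equiv.swap 0 t).injective hab)
        {v : ℕ → ℝ | P2p v j s t} meas_P2p hSdep
      have hL : {ω | (fun a => X a ω) ∈ {v : ℕ → ℝ | P2p v j s t}} = sP2 j s t := rfl
      have hR : {ω | (fun a => X ((Equiv.swap 0 t) a) ω) ∈ {v : ℕ → ℝ | P2p v j s t}} =
          {ω | E''p (π ω) j s t} := by
        ext ω
        simp only [Set.mem_setOf_eq]
        exact P2p_swap (fun a => rfl)
      rw [hL, hR] at he
      rw [he]
      -- now compare E'' with E' modulo ties
      refine measure_eq_of_symmdiff_null (N1 := {ω | X t ω = X s ω})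
        (N2 := {ω | X 0 ω = X t ω}) ?_ ?_
        (ties_null hmeas hindep hident hcont hts)
        (ties_null hmeas hindep hident hcont (Ne.symm ht0)) 
      · rintro ω ⟨h1, h2⟩
        rcases E''_sub h1 with h | h
        · exact absurd h h2
        · exact h
      · rintro ω ⟨h1, h2⟩
        rcases E'_sub h1 with h | h
        · exact absurd h h2
        · exact h
    · have h1 : sP2 j s t = ∅ := by
        ext ω
        simp only [hsP2def, Set.mem_setOf_eq, Set.mem_empty_iff_false, iff_false]
        rintro ⟨hrec, _, hlt, _⟩
        exact hst ⟨hrec.1, hlt⟩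
      have h2 : sE' j s t = ∅ := by
        ext ω
        simp only [hsE'def, Set.mem_setOf_eq, Set.mem_empty_iff_false, iff_false]
        rintro ⟨hrec, _, hlt, _⟩
        exact hst ⟨hrec.1, hlt⟩
      rw [h1, h2]
  -- step 4 : D at level j+1 decomposes along E'
  have h4 : ∀ j, 1 ≤ j → ∀ t, μ (sD (j + 1) t) = ∑' s, μ (sE' j s t) := by
    intro j hj t
    have hun : sD (j + 1) t = ⋃ s, sE' j s t := by
      ext ω
      simp only [hsDdef, hsE'def, Set.mem_iUnion, Set.mem_setOf_eq]
      exact ⟨fun h => D_to_E' hj h, fun ⟨s, hs⟩ => E'_to_D hs⟩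
    rw [hun, measure_iUnion (hE'disj j t) (fun s => hE'meas j s t)]
  -- the recursion
  have hstep : ∀ j, 1 ≤ j → μ (U j) = 2 * μ (U (j + 1)) := by
    intro j hj
    have hE2 : ∀ s t, μ (sE j s t) = 2 * μ (sE' j s t) := by
      intro s t
      rw [hsplit j s t, hP2E' j s t, two_mul]
    calc μ (U j) = μ (⋃ t, sD j t) := by rw [hU_D j hj]
    _ = ∑' s, μ (sD j s) := measure_iUnion (hDdisj j) (hDmeas j)
    _ = ∑' s, ∑' t, μ (sE j s t) := tsum_congr fun s => h2 j s
    _ = ∑' s, ∑' t, 2 * μ (sE' j s t) := tsum_congr fun s => tsum_congr fun t => hE2 s t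
    _ = 2 * ∑' s, ∑' t, μ (sE' j s t) := by
        rw [← ENNReal.tsum_mul_left]
        exact tsum_congr fun s => by rw [← ENNReal.tsum_mul_left]
    _ = 2 * ∑' t, ∑' s, μ (sE' j s t) := by rw [ENNReal.tsum_comm]
    _ = 2 * ∑' t, μ (sD (j + 1) t) := by
        congr 1
        exact tsum_congr fun t => (h4 j hj t).symm
    _ = 2 * μ (U (j + 1)) := by
        rw [hU_D (j + 1) (by omega), measure_iUnion (hDdisj (j + 1)) (hDmeas (j + 1))]
  -- base cases
  have h0 : μ (U 0) = 1 := by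
    have : U 0 = Set.univ := by
      apply Set.eq_univ_of_forall
      intro ω
      simp only [hUdef, Set.mem_iUnion, Set.mem_setOf_eq]
      exact ⟨0, Nat.zero_le _⟩
    rw [this]
    exact measure_univ
  have h1base : μ (U 1) = 2⁻¹ := by
    have hU1 : U 1 = {ω | X 1 ω ≤ X 0 ω} := by
      ext ω
      simp only [hUdef, Set.mem_iUnion, Set.mem_setOf_eq]
      exact L9
    have hSdep : ∀ v w : ℕ → ℝ, (∀ a, a < 2 → v a = w a) →
        (v ∈ {v : ℕ → ℝ | v 1 ≤ v 0} ↔ w ∈ {v : ℕ → ℝ | v 1 ≤ v 0}) := by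
      intro v w h
      simp only [Set.mem_setOf_eq]
      rw [h 1 (by omega), h 0 (by omega)]
    have he := exchange hmeas hindep hident 2 (fun a => a) (fun a => (Equiv.swap 0 1) a)
      (fun a _ b _ hab => hab)
      (by intro a _ b _ hab; exact (Equiv.swap 0 1).injective hab)
      {v : ℕ → ℝ | v 1 ≤ v 0} (meas_vle 1 0) hSdep
    have hL : {ω | (fun a => X a ω) ∈ {v : ℕ → ℝ | v 1 ≤ v 0}} = {ω | X 1 ω ≤ X 0 ω} := rfl
    have hR : {ω | (fun a => X ((Equiv.swap 0 1) a) ω) ∈ {v : ℕ → ℝ | v 1 ≤ v 0}} =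
        {ω | X 0 ω ≤ X 1 ω} := by
      ext ω
      simp only [Set.mem_setOf_eq]
      rw [Equiv.swap_apply_left, Equiv.swap_apply_right]
    rw [hL, hR] at he
    have hcover : {ω | X 1 ω ≤ X 0 ω} ∪ {ω | X 0 ω ≤ X 1 ω} = Set.univ :=
      Set.eq_univ_of_forall fun ω => by
        rcases le_total (X 1 ω) (X 0 ω) with h | h
        · exact Or.inl h
        · exact Or.inr h
    have hinter : μ ({ω | X 1 ω ≤ X 0 ω} ∩ {ω | X 0 ω ≤ X 1 ω}) = 0 := by
      have hsub : {ω | X 1 ω ≤ X 0 ω} ∩ {ω | X 0 ω ≤ X 1 ω} ⊆ {ω | X 0 ω = X 1 ω} :=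
        fun ω ⟨ha, hb⟩ => le_antisymm hb ha
      exact le_antisymm
        (le_trans (measure_mono hsub) (ties_null hmeas hindep hident hcont (by omega)).le)
        zero_le
    have hadd : μ {ω | X 1 ω ≤ X 0 ω} + μ {ω | X 0 ω ≤ X 1 ω} = 1 := by
      rw [← measure_union_add_inter _ (measurableSet_le (hmeas 0) (hmeas 1)), hcover, hinter,
        measure_univ, add_zero]
    rw [← he] at hadd
    have h2x : 2 * μ {ω | X 1 ω ≤ X 0 ω} = 1 := by
      rw [two_mul]; exact hadd
    rw [hU1]
    calc μ {ω | X 1 ω ≤ X 0 ω} = (2⁻¹ * 2) * μ {ω | X 1 ω ≤ X 0 ω} := by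
          rw [ENNReal.inv_mul_cancel (by norm_num) (by norm_num), one_mul]
    _ = 2⁻¹ * (2 * μ {ω | X 1 ω ≤ X 0 ω}) := by ring
    _ = 2⁻¹ * 1 := by rw [h2x]
    _ = 2⁻¹ := mul_one _
  -- induction
  intro j
  induction j with
  | zero => exact h0.trans (pow_zero _).symm
  | succ i ih =>
    rcases Nat.eq_zero_or_pos i with rfl | hi
    · exact h1base.trans (pow_one _).symm
    · have hrec := hstep i hi
      have hih : μ (U i) = 2⁻¹ ^ i := ih
      rw [hih] at hrec
      show μ (U (i + 1)) = 2⁻¹ ^ (i + 1)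
      calc μ (U (i + 1)) = (2⁻¹ * 2) * μ (U (i + 1)) := by
            rw [ENNReal.inv_mul_cancel (by norm_num) (by norm_num), one_mul]
      _ = 2⁻¹ * (2 * μ (U (i + 1))) := by ring
      _ = 2⁻¹ * 2⁻¹ ^ i := by rw [← hrec]
      _ = 2⁻¹ ^ (i + 1) := by rw [pow_succ]; ring

end MainU

end AuxRecords

theorem stmt_16 {Ω : Type*} [MeasurableSpace Ω] (μ : Measure Ω) [IsProbabilityMeasure μ]
    (X : ℕ → Ω → ℝ) (hmeas : ∀ i, Measurable (X i))
    (hindep : iIndepFun X μ)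
    (hident : ∀ i, μ.map (X i) = μ.map (X 0))
    (hcont : ∀ x : ℝ, μ.map (X 0) {x} = 0)
    (k : ℕ) :
    Tendsto (fun n => μ {ω | brokenCount X n ω = k}) atTop
      (nhds (1 / 2 ^ (k + 1))) := by
  classical
  have hπ : Measurable (fun ω (a : ℕ) => X a ω) := measurable_pi_lambda _ fun a => hmeas a
  set G : ℕ → ℕ → Set Ω := fun n j => {ω | j ≤ brkCnt (fun a => X a ω) n} with hG
  have hGmeas : ∀ n j, MeasurableSet (G n j) := by
    intro n j
    have : G n j = (fun ω (a : ℕ) => X a ω) ⁻¹' {v | j ≤ brkCnt v n} := rfl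
    rw [this]
    exact hπ ((meas_brkCnt n) measurableSet_Ici)
  have hmono : ∀ j, Monotone fun n => G n j := by
    intro j n m hnm ω h
    exact le_trans h (brkCnt_mono hnm)
  have hUlim : ∀ j, Tendsto (fun n => μ (G n j)) atTop (nhds (μ (⋃ n, G n j))) :=
    fun j => tendsto_measure_iUnion_atTop (hmono j)
  have hUval : ∀ j, μ (⋃ n, G n j) = 2⁻¹ ^ j := measure_U hmeas hindep hident hcont
  have hev : ∀ n, 1 ≤ n →
      μ {ω | brokenCount X n ω = k} = μ (G n k) - μ (G n (k + 1)) := by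
    intro n hn
    have hrev := exchange hmeas hindep hident (n + 1) (fun a => n - a) (fun a => a)
      (by intro a ha b hb hab
          simp only [Set.mem_Iio] at ha hb
          have hab' : n - a = n - b := hab
          omega)
      (fun a _ b _ hab => hab)
      {v : ℕ → ℝ | brkCnt v n = k}
      ((meas_brkCnt n) (measurableSet_singleton k))
      (by intro v w h
          simp only [Set.mem_setOf_eq]
          rw [brkCnt_dep (fun a ha => h a (by omega))])
    have hpoint : ∀ ω : Ω, brokenCount X n ω = brkCnt (fun a => X (n - a) ω) n := by
      intro ω
      exact broken_eq (fun a => X a ω) n hn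
    have hL : {ω | (fun a => X (n - a) ω) ∈ {v : ℕ → ℝ | brkCnt v n = k}} =
        {ω | brokenCount X n ω = k} := by
      ext ω
      simp only [Set.mem_setOf_eq]
      rw [hpoint ω]
    have hR : {ω | (fun a => X a ω) ∈ {v : ℕ → ℝ | brkCnt v n = k}} =
        G n k \ G n (k + 1) := by
      ext ω
      simp only [hG, Set.mem_setOf_eq, Set.mem_diff]
      omega
    rw [hL, hR] at hrev
    rw [hrev]
    refine measure_diff ?_ ((hGmeas n (k + 1)).nullMeasurableSet) (measure_ne_top μ _)
    intro ω h
    have hω : k + 1 ≤ brkCnt (fun a => X a ω) n := h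
    exact le_trans (Nat.le_succ k) hω
  have hsub : Tendsto (fun n => μ (G n k) - μ (G n (k + 1))) atTop
      (nhds (2⁻¹ ^ k - 2⁻¹ ^ (k + 1))) := by
    refine ENNReal.Tendsto.sub ?_ ?_ (Or.inl ?_)
    · have := hUlim k
      rwa [hUval k] at this
    · have := hUlim (k + 1)
      rwa [hUval (k + 1)] at this
    · exact ENNReal.pow_ne_top (by norm_num)
  have hval : (2⁻¹ : ℝ≥0∞) ^ k - 2⁻¹ ^ (k + 1) = 1 / 2 ^ (k + 1) := by
    have hsplit : (2⁻¹ : ℝ≥0∞) ^ k = 2⁻¹ ^ (k + 1) + 2⁻¹ ^ (k + 1) := by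
      calc (2⁻¹ : ℝ≥0∞) ^ k = 2⁻¹ ^ k * 1 := (mul_one _).symm
      _ = 2⁻¹ ^ k * (2⁻¹ + 2⁻¹) := by rw [ENNReal.inv_two_add_inv_two]
      _ = 2⁻¹ ^ (k + 1) + 2⁻¹ ^ (k + 1) := by rw [mul_add, pow_succ]
    rw [hsplit, ENNReal.add_sub_cancel_right (ENNReal.pow_ne_top (by norm_num))]
    rw [one_div, ← ENNReal.inv_pow]
  rw [← hval]
  refine Tendsto.congr' ?_ hsub
  filter_upwards [eventually_ge_atTop 1] with n hn
  exact (hev n hn).symm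
end
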